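/- arXiv:2509.07921 — 4 statements merged into one kernel-verified Lean document; each statement's English description precedes it below -/
import Mathlib

section
/- The middle algebra with its full differential is a differential graded algebra: for the differential d^M = d^M_SFT + δ^M_str on A^M (equivalently, d^M(x) = {h^M, x} + δ^M_str(x)), one has d^M ∘ d^M = 0. -/
open MvPolynomial

/-- Raw generator names for the middle algebra. -/
inductive MGenRaw (n : ℕ) : Type
  | aL (i j : Fin n) : MGenRaw n
  | aR (i j : Fin n) : MGenRaw n
  | bL (i j : Fin n) : MGenRaw n
  | bR (i j : Fin n) : MGenRaw n

/-- Validity of a raw generator name, given the two pairings. -/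
def MGenValid {n : ℕ} (sL sR : Equiv.Perm (Fin n)) : MGenRaw n → Prop
  | .aL i j => i < j
  | .aR i j => i < j
  | .bL i j => i < j ∧ sL i = j
  | .bR i j => i < j ∧ sR i = j

/-- Generators of the middle algebra `A^M`. -/
def MGen (n : ℕ) (sL sR : Equiv.Perm (Fin n)) : Type :=
  {g : MGenRaw n // MGenValid sL sR g}

/-- The middle algebra `A^M`: the free commutative unital `𝔽₂`-algebra on the generators. -/
abbrev AM (n : ℕ) (sL sR : Equiv.Perm (Fin n)) : Type :=
  MvPolynomial (MGen n sL sR) (ZMod 2)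

/-- The generator `α^L_{ij}` (or `0` if `¬ i < j`). -/
noncomputable def genAL {n : ℕ} (sL sR : Equiv.Perm (Fin n)) (i j : Fin n) : AM n sL sR :=
  if h : i < j then X (⟨MGenRaw.aL i j, h⟩ : MGen n sL sR) else 0

/-- The generator `α^R_{ij}` (or `0` if `¬ i < j`). -/
noncomputable def genAR {n : ℕ} (sL sR : Equiv.Perm (Fin n)) (i j : Fin n) : AM n sL sR :=
  if h : i < j then X (⟨MGenRaw.aR i j, h⟩ : MGen n sL sR) else 0

/-- The generator `β^L_{ij}` (or `0` if invalid). -/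
noncomputable def genBL {n : ℕ} (sL sR : Equiv.Perm (Fin n)) (i j : Fin n) : AM n sL sR :=
  if h : i < j ∧ sL i = j then X (⟨MGenRaw.bL i j, h⟩ : MGen n sL sR) else 0

/-- The generator `β^R_{ij}` (or `0` if invalid). -/
noncomputable def genBR {n : ℕ} (sL sR : Equiv.Perm (Fin n)) (i j : Fin n) : AM n sL sR :=
  if h : i < j ∧ sR i = j then X (⟨MGenRaw.bR i j, h⟩ : MGen n sL sR) else 0

/-- The path `1, β^R(1), β^L(β^R(1)), …` (with `1` rendered as `0 : Fin n`). -/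
def pathSeq {n : ℕ} [NeZero n] (sL sR : Equiv.Perm (Fin n)) : ℕ → Fin n
  | 0 => 0
  | k + 1 => if k % 2 = 0 then sR (pathSeq sL sR k) else sL (pathSeq sL sR k)

/-- The β-generator traversed at step `k` of the path (indices in increasing order). -/
noncomputable def stepGen {n : ℕ} [NeZero n] (sL sR : Equiv.Perm (Fin n)) (k : ℕ) :
    AM n sL sR :=
  if k % 2 = 0 then
    genBR sL sR (min (pathSeq sL sR k) (pathSeq sL sR (k + 1)))
      (max (pathSeq sL sR k) (pathSeq sL sR (k + 1)))
  else
    genBL sL sR (min (pathSeq sL sR k) (pathSeq sL sR (k + 1)))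
      (max (pathSeq sL sR k) (pathSeq sL sR (k + 1)))

/-- `γ_i`: the sum of the β-generators along the path from `1` to the first occurrence of `i`. -/
noncomputable def gammaEl {n : ℕ} [NeZero n] (sL sR : Equiv.Perm (Fin n))
    (hvisit : ∀ i : Fin n, ∃ m, pathSeq sL sR m = i) (i : Fin n) : AM n sL sR :=
  ∑ k ∈ Finset.range (Nat.find (hvisit i)), stepGen sL sR k

/-- Values of the string differential `δ^M_str` on generators. -/
noncomputable def deltaStrVal {n : ℕ} [NeZero n] (sL sR : Equiv.Perm (Fin n))
    (hvisit : ∀ i : Fin n, ∃ m, pathSeq sL sR m = i) : MGen n sL sR → AM n sL sR :=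
  fun g =>
    match g.1 with
    | .aR i j =>
        (gammaEl sL sR hvisit i + gammaEl sL sR hvisit j) * genAR sL sR i j
          + ∑ k : Fin n, if i < k ∧ k < j then genAR sL sR i k * genAR sL sR k j else 0
    | .aL i j =>
        (gammaEl sL sR hvisit i + gammaEl sL sR hvisit j) * genAL sL sR i j
          + ∑ k : Fin n, if i < k ∧ k < j then genAL sL sR i k * genAL sL sR k j else 0
    | .bR i j => genBR sL sR i j ^ 2
    | .bL i j => genBL sL sR i j ^ 2

/-- The common value of `d^M_SFT` on the β-generators `β^x_{ij}`. -/
noncomputable def betaSFTVal {n : ℕ} (sL sR : Equiv.Perm (Fin n)) (i j : Fin n) : AM n sL sR :=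
  (∑ k : Fin n, if k < i then genAL sL sR k i * genAR sL sR k i else 0)
    + (∑ k : Fin n, if i < k ∧ k ≠ j then genAL sL sR i k * genAR sL sR i k else 0)
    + (∑ k : Fin n, if k < j ∧ k ≠ i then genAL sL sR k j * genAR sL sR k j else 0)
    + (∑ k : Fin n, if j < k then genAL sL sR j k * genAR sL sR j k else 0)

/-- Values of the SFT differential `d^M_SFT` on generators. -/
noncomputable def dSFTVal {n : ℕ} (sL sR : Equiv.Perm (Fin n)) : MGen n sL sR → AM n sL sR :=
  fun g =>
    match g.1 with
    | .aR i j =>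
        (∑ k : Fin n, if j < k then genAR sL sR i k * genAL sL sR j k else 0)
          + (∑ k : Fin n, if k < i then genAR sL sR k j * genAL sL sR k i else 0)
    | .aL i j =>
        (∑ k : Fin n, if j < k then genAL sL sR i k * genAR sL sR j k else 0)
          + (∑ k : Fin n, if k < i then genAL sL sR k j * genAR sL sR k i else 0)
    | .bL i j => betaSFTVal sL sR i j
    | .bR i j => betaSFTVal sL sR i j

/-- The prescribed values of the SFT bracket on pairs of generators. -/
noncomputable def mBrVal {n : ℕ} (sL sR : Equiv.Perm (Fin n)) :
    MGen n sL sR → MGen n sL sR → AM n sL sR :=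
  fun g g' =>
    match g.1, g'.1 with
    | .aL i j, .aL k l =>
        if j = k then genAL sL sR i l else if i = l then genAL sL sR k j else 0
    | .aR i j, .aR k l =>
        if j = k then genAR sL sR i l else if i = l then genAR sL sR k j else 0
    | .aL i j, .bL k l =>
        if Xor (i = k ∨ i = l) (j = k ∨ j = l) then genAL sL sR i j else 0
    | .bL k l, .aL i j =>
        if Xor (i = k ∨ i = l) (j = k ∨ j = l) then genAL sL sR i j else 0
    | .aR i j, .bR k l =>
        if Xor (i = k ∨ i = l) (j = k ∨ j = l) then genAR sL sR i j else 0
    | .bR k l, .aR i j =>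
        if Xor (i = k ∨ i = l) (j = k ∨ j = l) then genAR sL sR i j else 0
    | _, _ => 0

/-- `Br` is *the* SFT bracket: the symmetric `𝔽₂`-bilinear operation on `A^M` satisfying the
Leibniz rule in each variable and taking the prescribed values on generators. -/
def IsSFTBracket {n : ℕ} (sL sR : Equiv.Perm (Fin n))
    (Br : AM n sL sR → AM n sL sR → AM n sL sR) : Prop :=
  (∀ x y, Br x y = Br y x) ∧
    (∀ x y z, Br x (y + z) = Br x y + Br x z) ∧
    (∀ x y z, Br x (y * z) = Br x y * z + y * Br x z) ∧
    (∀ g g' : MGen n sL sR, Br (X g) (X g') = mBrVal sL sR g g')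

/-- The Hamiltonian `h^M = Σ_{i<j} α^L_{ij} α^R_{ij}`. -/
noncomputable def hamM {n : ℕ} (sL sR : Equiv.Perm (Fin n)) : AM n sL sR :=
  ∑ i : Fin n, ∑ j : Fin n, if i < j then genAL sL sR i j * genAR sL sR i j else 0

/-- The quadratic Hamiltonian `h^M_2`. -/
noncomputable def hamM2 {n : ℕ} (sL sR : Equiv.Perm (Fin n)) : AM n sL sR :=
  (∑ i : Fin n, ∑ k : Fin n, ∑ j : Fin n,
      if i < k ∧ k < j then genAR sL sR i k * genAR sL sR k j * genAL sL sR i j else 0)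
    + (∑ i : Fin n, ∑ k : Fin n, ∑ j : Fin n,
      if i < k ∧ k < j then genAL sL sR i k * genAL sL sR k j * genAR sL sR i j else 0)

/-- Maslov weights of generators, given a Maslov potential `μ`. -/
def mWeight {n : ℕ} (sL sR : Equiv.Perm (Fin n)) (μ : Fin n → ℤ) : MGen n sL sR → ℤ :=
  fun g =>
    match g.1 with
    | .aL i j => μ i - μ j - 1
    | .aR i j => μ j - μ i - 1
    | .bL _ _ => -1
    | .bR _ _ => -1

set_option linter.unusedSectionVars false
set_option linter.unusedVariables false
set_option maxHeartbeats 1000000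


section MasterDGA

variable {R : Type*} [CommRing R] [Algebra (ZMod 2) R]

lemma mdga_twoz (x : R) : x + x = 0 := by
  rw [← two_smul (ZMod 2) x, show (2 : ZMod 2) = 0 from rfl, zero_smul]

lemma mdga_sq_sum {ι : Type*} (s : Finset ι) (f : ι → R) :
    (∑ x ∈ s, f x) ^ 2 = ∑ x ∈ s, f x ^ 2 := by
  induction s using Finset.cons_induction with
  | empty => simp
  | cons a s ha ih =>
      rw [Finset.sum_cons, Finset.sum_cons, add_sq, ih]
      linear_combination mdga_twoz (f a * ∑ x ∈ s, f x)

lemma mdga_telescope (g : ℕ → R) (m : ℕ) :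
    ∑ k ∈ Finset.range m, (g k + g (k + 1)) = g 0 + g m := by
  induction m with
  | zero => simp only [Finset.range_zero, Finset.sum_empty]; exact (mdga_twoz (g 0)).symm
  | succ m ih => rw [Finset.sum_range_succ, ih]; linear_combination mdga_twoz (g m)

variable {ν : ℕ}

lemma mdga_D2cancel (f g : Fin ν → Fin ν → R) (h : ∀ k l, g k l = f l k) :
    ((∑ k, ∑ l, f k l) + ∑ k, ∑ l, g k l) = 0 := by
  have e : (∑ k, ∑ l, g k l) = ∑ k, ∑ l, f k l := by
    calc (∑ k, ∑ l, g k l) = ∑ k, ∑ l, f l k :=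
          Finset.sum_congr rfl fun k _ => Finset.sum_congr rfl fun l _ => h k l
      _ = ∑ k, ∑ l, f k l := Finset.sum_comm
  rw [e]; exact mdga_twoz _

lemma mdga_sum_ite_ne (i : Fin ν) (f : Fin ν → R) :
    (∑ k, if k = i then 0 else f k) = (∑ k, f k) + f i := by
  have h1 : (∑ k, f k) = (∑ k ∈ Finset.univ.erase i, f k) + f i :=
    (Finset.sum_erase_add _ _ (Finset.mem_univ i)).symm
  have h2 : (∑ k, if k = i then 0 else f k)
      = (∑ k ∈ Finset.univ.erase i, if k = i then 0 else f k) + (if i = i then 0 else f i) :=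
    (Finset.sum_erase_add _ _ (Finset.mem_univ i)).symm
  rw [h2, Finset.sum_congr rfl fun k hk => if_neg (Finset.mem_erase.mp hk).1, if_pos rfl, h1]
  linear_combination - mdga_twoz (f i)

/-- The common shape of the full differential on an `α`-generator. -/
def mdgaF (γ : Fin ν → R) (a b : Fin ν → Fin ν → R) (i j : Fin ν) : R :=
  (γ i + γ j) * a i j + (∑ k, a i k * a k j) + (∑ k, a i k * b j k) + (∑ k, a k j * b k i)

lemma mdga_Pvan (a : Fin ν → Fin ν → R) (ha0 : ∀ i j : Fin ν, ¬ i < j → a i j = 0)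
    (x y : Fin ν) (h : ¬ x < y) : (∑ l, a x l * a l y) = 0 :=
  Finset.sum_eq_zero fun l _ => by
    by_cases hx : x < l
    · rw [ha0 l y fun hl => h (hx.trans hl), mul_zero]
    · rw [ha0 x l hx, zero_mul]

section
variable (E : Derivation (ZMod 2) R R) (a b : Fin ν → Fin ν → R) (γ q : Fin ν → R)
variable (ha0 : ∀ i j : Fin ν, ¬ i < j → a i j = 0)
variable (hb0 : ∀ i j : Fin ν, ¬ i < j → b i j = 0)
variable (hEa : ∀ i j : Fin ν, E (a i j) = if i < j then mdgaF γ a b i j else 0)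
variable (hEb : ∀ i j : Fin ν, E (b i j) = if i < j then mdgaF γ b a i j else 0)

include ha0 hb0 hEa hEb in
lemma mdga_master_q (i : Fin ν) :
    E (∑ k, (b i k * a i k + b k i * a k i)) = 0 := by
  have step1 : E (∑ k, (b i k * a i k + b k i * a k i))
      = ∑ k, ((b i k * mdgaF γ a b i k + a i k * mdgaF γ b a i k)
        + (b k i * mdgaF γ a b k i + a k i * mdgaF γ b a k i)) := by
    rw [map_sum]
    refine Finset.sum_congr rfl fun k _ => ?_
    rw [map_add, Derivation.leibniz, Derivation.leibniz, smul_eq_mul, smul_eq_mul,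
      smul_eq_mul, smul_eq_mul, hEa, hEb, hEa, hEb]
    by_cases h1 : i < k
    · have h2 : ¬ k < i := asymm h1
      simp only [if_pos h1, if_neg h2, ha0 k i h2, hb0 k i h2]
      ring
    · by_cases h2 : k < i
      · simp only [if_pos h2, if_neg h1, ha0 i k h1, hb0 i k h1]
        ring
      · simp only [if_neg h1, if_neg h2, ha0 i k h1, hb0 i k h1, ha0 k i h2, hb0 k i h2]
        ring
  have step2 : ∀ k : Fin ν,
      ((b i k * mdgaF γ a b i k + a i k * mdgaF γ b a i k)
        + (b k i * mdgaF γ a b k i + a k i * mdgaF γ b a k i))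
      = ((∑ l, b i l * b l k) * a i k + (∑ l, b i l * a k l) * a i k
          + (∑ l, b l k * a l i) * a i k)
        + (b i k * (∑ l, a i l * a l k) + b i k * (∑ l, a i l * b k l)
          + b i k * (∑ l, a l k * b l i))
        + ((∑ l, b k l * b l i) * a k i + (∑ l, b k l * a i l) * a k i
          + (∑ l, b l i * a l k) * a k i)
        + (b k i * (∑ l, a k l * a l i) + b k i * (∑ l, a k l * b i l)
          + b k i * (∑ l, a l i * b l k)) := fun k => by
    simp only [mdgaF]
    linear_combination mdga_twoz ((γ i + γ k) * (b i k * a i k))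
      + mdga_twoz ((γ k + γ i) * (b k i * a k i))
  rw [step1, Finset.sum_congr rfl fun k _ => step2 k]
  simp only [Finset.sum_add_distrib, Finset.sum_mul, Finset.mul_sum]
  have p1 := mdga_D2cancel (fun k l => b i l * b l k * a i k)
    (fun k l => b i k * (a i l * b k l)) (fun k l => by ring)
  have p2 := mdga_D2cancel (fun k l => b i l * a k l * a i k)
    (fun k l => b i k * (a i l * a l k)) (fun k l => by ring)
  have p3 := mdga_D2cancel (fun k l => b l k * a l i * a i k)
    (fun k l => b k l * a i l * a k i) (fun k l => by ring)
  have p4 := mdga_D2cancel (fun k l => b i k * (a l k * b l i))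
    (fun k l => b k i * (a k l * b i l)) (fun k l => by ring)
  have p5 := mdga_D2cancel (fun k l => b k l * b l i * a k i)
    (fun k l => b k i * (a l i * b l k)) (fun k l => by ring)
  have p6 := mdga_D2cancel (fun k l => b l i * a l k * a k i)
    (fun k l => b k i * (a k l * a l i)) (fun k l => by ring)
  linear_combination p1 + p2 + p3 + p4 + p5 + p6


variable (hEg : ∀ i j : Fin ν, E (γ i + γ j) = (γ i + γ j) ^ 2 + q i + q j)
variable (hq : ∀ i : Fin ν, q i = ∑ k, (b i k * a i k + b k i * a k i))

include ha0 hb0 hEa hEb hEg hq in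
lemma mdga_master_alpha (i j : Fin ν) (hij : i < j) :
    E (mdgaF γ a b i j) = 0 := by
  -- Piece 0 : the `Γ·a` part
  have h0 : E ((γ i + γ j) * a i j)
      = (q i + q j) * a i j
        + (∑ k, (γ i + γ j) * (a i k * a k j))
        + (∑ k, (γ i + γ j) * (a i k * b j k))
        + (∑ k, (γ i + γ j) * (a k j * b k i)) := by
    have h0' : E ((γ i + γ j) * a i j)
        = (q i + q j) * a i j
          + (γ i + γ j) * (∑ k, a i k * a k j)
          + (γ i + γ j) * (∑ k, a i k * b j k)
          + (γ i + γ j) * (∑ k, a k j * b k i) := by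
      rw [Derivation.leibniz, smul_eq_mul, smul_eq_mul, hEa, if_pos hij, hEg]
      simp only [mdgaF]
      linear_combination mdga_twoz ((γ i + γ j) * ((γ i + γ j) * a i j))
    rw [h0']
    simp only [Finset.mul_sum]
  -- Piece 1 : the `a·a` sum
  have h1 : E (∑ k, a i k * a k j)
      = (∑ k, (γ i + γ j) * (a i k * a k j))
        + (∑ k, ∑ l, a i l * a l k * a k j)
        + (∑ k, ∑ l, a i k * (a k l * a l j))
        + (∑ k, (if i < k then (∑ l, a i l * b k l) + (∑ l, a l k * b l i) else 0) * a k j)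
        + (∑ k, a i k * (if k < j then (∑ l, a k l * b j l) + (∑ l, a l j * b l k) else 0)) := by
    rw [map_sum]
    have perk : ∀ k : Fin ν, E (a i k * a k j)
        = (γ i + γ j) * (a i k * a k j)
          + (∑ l, a i l * a l k) * a k j
          + a i k * (∑ l, a k l * a l j)
          + (if i < k then (∑ l, a i l * b k l) + (∑ l, a l k * b l i) else 0) * a k j
          + a i k * (if k < j then (∑ l, a k l * b j l) + (∑ l, a l j * b l k) else 0) := by
      intro k
      rw [Derivation.leibniz, smul_eq_mul, smul_eq_mul, hEa, hEa]
      by_cases h1k : i < k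
      · by_cases hkj : k < j
        · simp only [if_pos h1k, if_pos hkj, mdgaF]
          linear_combination mdga_twoz (γ k * (a i k * a k j))
        · simp only [if_pos h1k, if_neg hkj, ha0 k j hkj, mdga_Pvan a ha0 k j hkj, mdgaF]
          ring
      · by_cases hkj : k < j
        · simp only [if_neg h1k, if_pos hkj, ha0 i k h1k, mdga_Pvan a ha0 i k h1k, mdgaF]
          ring
        · simp only [if_neg h1k, if_neg hkj, ha0 i k h1k, ha0 k j hkj,
            mdga_Pvan a ha0 i k h1k, mdga_Pvan a ha0 k j hkj]
          ring
    rw [Finset.sum_congr rfl fun k _ => perk k]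
    simp only [Finset.sum_add_distrib, Finset.sum_mul, Finset.mul_sum]
  -- Piece 2 : the `a·b(j,·)` sum
  have h2 : E (∑ k, a i k * b j k)
      = (∑ k, (γ i + γ j) * (a i k * b j k))
        + (∑ k, ∑ l, a i l * a l k * b j k)
        + (∑ k, ∑ l, a i l * b k l * b j k)
        + (∑ k, ∑ l, a l k * b l i * b j k)
        + (∑ k, ∑ l, a i k * (b j l * b l k))
        + (∑ k, a i k * (if j < k then (∑ l, b j l * a k l) + (∑ l, b l k * a l j) else 0)) := by
    rw [map_sum]
    have perk : ∀ k : Fin ν, E (a i k * b j k)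
        = (γ i + γ j) * (a i k * b j k)
          + (∑ l, a i l * a l k) * b j k
          + (∑ l, a i l * b k l) * b j k
          + (∑ l, a l k * b l i) * b j k
          + a i k * (∑ l, b j l * b l k)
          + a i k * (if j < k then (∑ l, b j l * a k l) + (∑ l, b l k * a l j) else 0) := by
      intro k
      rw [Derivation.leibniz, smul_eq_mul, smul_eq_mul, hEa, hEb]
      by_cases hjk : j < k
      · have hik : i < k := hij.trans hjk
        simp only [if_pos hjk, if_pos hik, mdgaF]
        linear_combination mdga_twoz (γ k * (a i k * b j k))
      · simp only [if_neg hjk, hb0 j k hjk, mdga_Pvan b hb0 j k hjk]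
        ring
    rw [Finset.sum_congr rfl fun k _ => perk k]
    simp only [Finset.sum_add_distrib, Finset.sum_mul, Finset.mul_sum]
  -- Piece 3 : the `a·b(·,i)` sum
  have h3 : E (∑ k, a k j * b k i)
      = (∑ k, (γ i + γ j) * (a k j * b k i))
        + (∑ k, ∑ l, a k l * a l j * b k i)
        + (∑ k, ∑ l, a k l * b j l * b k i)
        + (∑ k, ∑ l, a l j * b l k * b k i)
        + (∑ k, ∑ l, a k j * (b k l * b l i))
        + (∑ k, a k j * (if k < i then (∑ l, b k l * a i l) + (∑ l, b l i * a l k) else 0)) := by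
    rw [map_sum]
    have perk : ∀ k : Fin ν, E (a k j * b k i)
        = (γ i + γ j) * (a k j * b k i)
          + (∑ l, a k l * a l j) * b k i
          + (∑ l, a k l * b j l) * b k i
          + (∑ l, a l j * b l k) * b k i
          + a k j * (∑ l, b k l * b l i)
          + a k j * (if k < i then (∑ l, b k l * a i l) + (∑ l, b l i * a l k) else 0) := by
      intro k
      rw [Derivation.leibniz, smul_eq_mul, smul_eq_mul, hEb, hEa]
      by_cases hki : k < i
      · have hkj : k < j := hki.trans hij
        simp only [if_pos hki, if_pos hkj, mdgaF]
        linear_combination mdga_twoz (γ k * (a k j * b k i))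
      · simp only [if_neg hki, hb0 k i hki, mdga_Pvan b hb0 k i hki]
        ring
    rw [Finset.sum_congr rfl fun k _ => perk k]
    simp only [Finset.sum_add_distrib, Finset.sum_mul, Finset.mul_sum]
  -- the two guarded sums combine into `q`-terms and honest double sums
  have hSw : (∑ k, (if i < k then (∑ l, a i l * b k l) + (∑ l, a l k * b l i) else 0) * a k j)
      + (∑ k, a k j * (if k < i then (∑ l, b k l * a i l) + (∑ l, b l i * a l k) else 0))
      = (∑ k, ∑ l, a i l * b k l * a k j) + (∑ k, ∑ l, a l k * b l i * a k j)
        + q i * a i j := by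
    have ecomb : ∀ k : Fin ν,
        (if i < k then (∑ l, a i l * b k l) + (∑ l, a l k * b l i) else 0) * a k j
          + a k j * (if k < i then (∑ l, b k l * a i l) + (∑ l, b l i * a l k) else 0)
        = (if k = i then 0
            else ((∑ l, a i l * b k l) + (∑ l, a l k * b l i)) * a k j) := by
      intro k
      have e1 : (∑ l, b k l * a i l) = ∑ l, a i l * b k l :=
        Finset.sum_congr rfl fun l _ => mul_comm _ _
      have e2 : (∑ l, b l i * a l k) = ∑ l, a l k * b l i :=
        Finset.sum_congr rfl fun l _ => mul_comm _ _
      rcases lt_trichotomy i k with h | h | h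
      · rw [if_pos h, if_neg (asymm h), if_neg (ne_of_gt h)]
        ring
      · rw [if_neg (h ▸ lt_irrefl i), if_neg (h ▸ lt_irrefl i), if_pos h.symm]
        ring
      · rw [if_neg (asymm h), if_pos h, if_neg (ne_of_lt h), e1, e2]
        ring
    rw [← Finset.sum_add_distrib, Finset.sum_congr rfl fun k _ => ecomb k, mdga_sum_ite_ne]
    have efi : ((∑ l, a i l * b i l) + (∑ l, a l i * b l i)) * a i j = q i * a i j := by
      rw [hq i, Finset.sum_add_distrib]
      have e1 : (∑ l, b i l * a i l) = ∑ l, a i l * b i l :=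
        Finset.sum_congr rfl fun l _ => mul_comm _ _
      have e2 : (∑ l, b l i * a l i) = ∑ l, a l i * b l i :=
        Finset.sum_congr rfl fun l _ => mul_comm _ _
      rw [e1, e2]
    rw [efi.symm]
    congr 1
    rw [← Finset.sum_add_distrib]
    refine Finset.sum_congr rfl fun k _ => ?_
    rw [add_mul, Finset.sum_mul, Finset.sum_mul]
  have hSv : (∑ k, a i k * (if k < j then (∑ l, a k l * b j l) + (∑ l, a l j * b l k) else 0))
      + (∑ k, a i k * (if j < k then (∑ l, b j l * a k l) + (∑ l, b l k * a l j) else 0))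
      = (∑ k, ∑ l, a i k * (a k l * b j l)) + (∑ k, ∑ l, a i k * (a l j * b l k))
        + a i j * q j := by
    have ecomb : ∀ k : Fin ν,
        a i k * (if k < j then (∑ l, a k l * b j l) + (∑ l, a l j * b l k) else 0)
          + a i k * (if j < k then (∑ l, b j l * a k l) + (∑ l, b l k * a l j) else 0)
        = (if k = j then 0
            else a i k * ((∑ l, a k l * b j l) + (∑ l, a l j * b l k))) := by
      intro k
      have e1 : (∑ l, b j l * a k l) = ∑ l, a k l * b j l :=
        Finset.sum_congr rfl fun l _ => mul_comm _ _
      have e2 : (∑ l, b l k * a l j) = ∑ l, a l j * b l k :=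
        Finset.sum_congr rfl fun l _ => mul_comm _ _
      rcases lt_trichotomy k j with h | h | h
      · rw [if_pos h, if_neg (asymm h), if_neg (ne_of_lt h)]
        ring
      · rw [if_neg (h ▸ lt_irrefl k), if_neg (h ▸ lt_irrefl k), if_pos h]
        ring
      · rw [if_neg (asymm h), if_pos h, if_neg (ne_of_gt h), e1, e2]
        ring
    rw [← Finset.sum_add_distrib, Finset.sum_congr rfl fun k _ => ecomb k, mdga_sum_ite_ne]
    have efj : a i j * ((∑ l, a j l * b j l) + (∑ l, a l j * b l j)) = a i j * q j := by
      rw [hq j, Finset.sum_add_distrib]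
      have e1 : (∑ l, b j l * a j l) = ∑ l, a j l * b j l :=
        Finset.sum_congr rfl fun l _ => mul_comm _ _
      have e2 : (∑ l, b l j * a l j) = ∑ l, a l j * b l j :=
        Finset.sum_congr rfl fun l _ => mul_comm _ _
      rw [e1, e2]
    rw [efj.symm]
    congr 1
    rw [← Finset.sum_add_distrib]
    refine Finset.sum_congr rfl fun k _ => ?_
    rw [mul_add, Finset.mul_sum, Finset.mul_sum]
  -- assemble
  have htot : E (mdgaF γ a b i j)
      = E ((γ i + γ j) * a i j) + E (∑ k, a i k * a k j)
        + E (∑ k, a i k * b j k) + E (∑ k, a k j * b k i) := by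
    simp only [mdgaF, map_add]
  rw [htot, h0, h1, h2, h3]
  have pAAA := mdga_D2cancel (fun k l => a i l * a l k * a k j)
    (fun k l => a i k * (a k l * a l j)) (fun k l => by ring)
  have pY12 := mdga_D2cancel (fun k l => a i l * b k l * a k j)
    (fun k l => a i k * (a l j * b l k)) (fun k l => by ring)
  have pY3 := mdga_D2cancel (fun k l => a i l * a l k * b j k)
    (fun k l => a i k * (a k l * b j l)) (fun k l => by ring)
  have pY4 := mdga_D2cancel (fun k l => a l k * b l i * a k j)
    (fun k l => a k l * a l j * b k i) (fun k l => by ring)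
  have pB1 := mdga_D2cancel (fun k l => a i l * b k l * b j k)
    (fun k l => a i k * (b j l * b l k)) (fun k l => by ring)
  have pB2 := mdga_D2cancel (fun k l => a l k * b l i * b j k)
    (fun k l => a k l * b j l * b k i) (fun k l => by ring)
  have pB3 := mdga_D2cancel (fun k l => a l j * b l k * b k i)
    (fun k l => a k j * (b k l * b l i)) (fun k l => by ring)
  linear_combination hSw + hSv + pAAA + pY12 + pY3 + pY4 + pB1 + pB2 + pB3
    + mdga_twoz (∑ k, (γ i + γ j) * (a i k * a k j))
    + mdga_twoz (∑ k, (γ i + γ j) * (a i k * b j k))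
    + mdga_twoz (∑ k, (γ i + γ j) * (a k j * b k i))
    + mdga_twoz (q i * a i j) + mdga_twoz (a i j * q j)

end

end MasterDGA

section Instantiation

variable {n : ℕ} [NeZero n] {sL sR : Equiv.Perm (Fin n)}

lemma genAR_zero {i j : Fin n} (h : ¬ i < j) : genAR sL sR i j = 0 := dif_neg h
lemma genAL_zero {i j : Fin n} (h : ¬ i < j) : genAL sL sR i j = 0 := dif_neg h

/-- `q_i = Σ_k (α^L α^R)` over pairs containing `i`. -/
noncomputable def qI (sL sR : Equiv.Perm (Fin n)) (i : Fin n) : AM n sL sR :=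
  ∑ k, (genAL sL sR i k * genAR sL sR i k + genAL sL sR k i * genAR sL sR k i)

lemma inst_beta_q (u v : Fin n) :
    betaSFTVal sL sR u v = qI sL sR u + qI sL sR v := by
  have c1 : (∑ k, if k < u then genAL sL sR k u * genAR sL sR k u else 0)
      = ∑ k, genAL sL sR k u * genAR sL sR k u :=
    Finset.sum_congr rfl fun k _ => by
      by_cases hk : k < u
      · rw [if_pos hk]
      · rw [if_neg hk, genAL_zero hk, zero_mul]
  have c4 : (∑ k, if v < k then genAL sL sR v k * genAR sL sR v k else 0)
      = ∑ k, genAL sL sR v k * genAR sL sR v k :=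
    Finset.sum_congr rfl fun k _ => by
      by_cases hk : v < k
      · rw [if_pos hk]
      · rw [if_neg hk, genAL_zero hk, zero_mul]
  have c2 : (∑ k, if u < k ∧ k ≠ v then genAL sL sR u k * genAR sL sR u k else 0)
      = (∑ k, genAL sL sR u k * genAR sL sR u k) + genAL sL sR u v * genAR sL sR u v := by
    rw [← mdga_sum_ite_ne v (fun k => genAL sL sR u k * genAR sL sR u k)]
    refine Finset.sum_congr rfl fun k _ => ?_
    by_cases hkv : k = v
    · rw [if_pos hkv, if_neg fun hc => hc.2 hkv]
    · rw [if_neg hkv]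
      by_cases hk : u < k
      · rw [if_pos ⟨hk, hkv⟩]
      · rw [if_neg fun hc => hk hc.1, genAL_zero hk, zero_mul]
  have c3 : (∑ k, if k < v ∧ k ≠ u then genAL sL sR k v * genAR sL sR k v else 0)
      = (∑ k, genAL sL sR k v * genAR sL sR k v) + genAL sL sR u v * genAR sL sR u v := by
    rw [← mdga_sum_ite_ne u (fun k => genAL sL sR k v * genAR sL sR k v)]
    refine Finset.sum_congr rfl fun k _ => ?_
    by_cases hku : k = u
    · rw [if_pos hku, if_neg fun hc => hc.2 hku]
    · rw [if_neg hku]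
      by_cases hk : k < v
      · rw [if_pos ⟨hk, hku⟩]
      · rw [if_neg fun hc => hk hc.1, genAL_zero hk, zero_mul]
  have equ : qI sL sR u = (∑ k, genAL sL sR u k * genAR sL sR u k)
      + ∑ k, genAL sL sR k u * genAR sL sR k u := by
    rw [qI, Finset.sum_add_distrib]
  have eqv : qI sL sR v = (∑ k, genAL sL sR v k * genAR sL sR v k)
      + ∑ k, genAL sL sR k v * genAR sL sR k v := by
    rw [qI, Finset.sum_add_distrib]
  rw [betaSFTVal, c1, c2, c3, c4, equ, eqv]
  linear_combination mdga_twoz (genAL sL sR u v * genAR sL sR u v)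

section WithDiff

variable (hvisit : ∀ i : Fin n, ∃ m, pathSeq sL sR m = i)
variable (E : Derivation (ZMod 2) (AM n sL sR) (AM n sL sR))
variable (hE : ∀ g : MGen n sL sR, E (X g) = dSFTVal sL sR g + deltaStrVal sL sR hvisit g)

include hE in
lemma inst_EaR (i j : Fin n) :
    E (genAR sL sR i j)
      = if i < j then
          mdgaF (gammaEl sL sR hvisit) (genAR sL sR) (genAL sL sR) i j
        else 0 := by
  by_cases h : i < j
  · rw [if_pos h, show genAR sL sR i j = X (⟨MGenRaw.aR i j, h⟩ : MGen n sL sR) from dif_pos h]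
    erw [hE]
    have hd : dSFTVal sL sR (⟨MGenRaw.aR i j, h⟩ : MGen n sL sR)
        = (∑ k, if j < k then genAR sL sR i k * genAL sL sR j k else 0)
          + ∑ k, if k < i then genAR sL sR k j * genAL sL sR k i else 0 := rfl
    have hs : deltaStrVal sL sR hvisit (⟨MGenRaw.aR i j, h⟩ : MGen n sL sR)
        = (gammaEl sL sR hvisit i + gammaEl sL sR hvisit j) * genAR sL sR i j
          + ∑ k, if i < k ∧ k < j then genAR sL sR i k * genAR sL sR k j else 0 := rfl
    have c1 : (∑ k, if j < k then genAR sL sR i k * genAL sL sR j k else 0)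
        = ∑ k, genAR sL sR i k * genAL sL sR j k :=
      Finset.sum_congr rfl fun k _ => by
        by_cases hk : j < k
        · rw [if_pos hk]
        · rw [if_neg hk, genAL_zero hk, mul_zero]
    have c2 : (∑ k, if k < i then genAR sL sR k j * genAL sL sR k i else 0)
        = ∑ k, genAR sL sR k j * genAL sL sR k i :=
      Finset.sum_congr rfl fun k _ => by
        by_cases hk : k < i
        · rw [if_pos hk]
        · rw [if_neg hk, genAL_zero hk, mul_zero]
    have c3 : (∑ k, if i < k ∧ k < j then genAR sL sR i k * genAR sL sR k j else 0)
        = ∑ k, genAR sL sR i k * genAR sL sR k j :=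
      Finset.sum_congr rfl fun k _ => by
        by_cases hik : i < k
        · by_cases hkj : k < j
          · rw [if_pos ⟨hik, hkj⟩]
          · rw [if_neg fun hc => hkj hc.2, genAR_zero hkj, mul_zero]
        · rw [if_neg fun hc => hik hc.1, genAR_zero hik, zero_mul]
    rw [hd, hs, c1, c2, c3, mdgaF]
    ring
  · rw [if_neg h, genAR_zero h, map_zero]

include hE in
lemma inst_EaL (i j : Fin n) :
    E (genAL sL sR i j)
      = if i < j then
          mdgaF (gammaEl sL sR hvisit) (genAL sL sR) (genAR sL sR) i j
        else 0 := by
  by_cases h : i < j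
  · rw [if_pos h, show genAL sL sR i j = X (⟨MGenRaw.aL i j, h⟩ : MGen n sL sR) from dif_pos h]
    erw [hE]
    have hd : dSFTVal sL sR (⟨MGenRaw.aL i j, h⟩ : MGen n sL sR)
        = (∑ k, if j < k then genAL sL sR i k * genAR sL sR j k else 0)
          + ∑ k, if k < i then genAL sL sR k j * genAR sL sR k i else 0 := rfl
    have hs : deltaStrVal sL sR hvisit (⟨MGenRaw.aL i j, h⟩ : MGen n sL sR)
        = (gammaEl sL sR hvisit i + gammaEl sL sR hvisit j) * genAL sL sR i j
          + ∑ k, if i < k ∧ k < j then genAL sL sR i k * genAL sL sR k j else 0 := rfl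
    have c1 : (∑ k, if j < k then genAL sL sR i k * genAR sL sR j k else 0)
        = ∑ k, genAL sL sR i k * genAR sL sR j k :=
      Finset.sum_congr rfl fun k _ => by
        by_cases hk : j < k
        · rw [if_pos hk]
        · rw [if_neg hk, genAR_zero hk, mul_zero]
    have c2 : (∑ k, if k < i then genAL sL sR k j * genAR sL sR k i else 0)
        = ∑ k, genAL sL sR k j * genAR sL sR k i :=
      Finset.sum_congr rfl fun k _ => by
        by_cases hk : k < i
        · rw [if_pos hk]
        · rw [if_neg hk, genAR_zero hk, mul_zero]
    have c3 : (∑ k, if i < k ∧ k < j then genAL sL sR i k * genAL sL sR k j else 0)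
        = ∑ k, genAL sL sR i k * genAL sL sR k j :=
      Finset.sum_congr rfl fun k _ => by
        by_cases hik : i < k
        · by_cases hkj : k < j
          · rw [if_pos ⟨hik, hkj⟩]
          · rw [if_neg fun hc => hkj hc.2, genAL_zero hkj, mul_zero]
        · rw [if_neg fun hc => hik hc.1, genAL_zero hik, zero_mul]
    rw [hd, hs, c1, c2, c3, mdgaF]
    ring
  · rw [if_neg h, genAL_zero h, map_zero]

variable (hsLne : ∀ i, sL i ≠ i) (hsLinv : ∀ i, sL (sL i) = i)
variable (hsRne : ∀ i, sR i ≠ i) (hsRinv : ∀ i, sR (sR i) = i)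

include hE hsLne hsLinv hsRne hsRinv in
lemma inst_Estep (k : ℕ) :
    E (stepGen sL sR k) = stepGen sL sR k ^ 2
      + (qI sL sR (pathSeq sL sR k) + qI sL sR (pathSeq sL sR (k + 1))) := by
  set u := pathSeq sL sR k with hu
  set v := pathSeq sL sR (k + 1) with hv
  by_cases hk : k % 2 = 0
  · have hvs : v = sR u := by rw [hv, pathSeq, if_pos hk]
    have hne : u ≠ v := fun he => hsRne u (by rw [← hvs, ← he])
    have hlt : min u v < max u v := min_lt_max.mpr hne
    have hmax : sR (min u v) = max u v := by
      rcases lt_or_gt_of_ne hne with h | h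
      · rw [min_eq_left h.le, max_eq_right h.le, ← hvs]
      · rw [min_eq_right h.le, max_eq_left h.le, hvs, hsRinv]
    have hstep : stepGen sL sR k
        = X (⟨MGenRaw.bR (min u v) (max u v), ⟨hlt, hmax⟩⟩ : MGen n sL sR) := by
      rw [stepGen, if_pos hk, ← hu, ← hv, genBR, dif_pos ⟨hlt, hmax⟩]
      rfl
    have hd : dSFTVal sL sR
        (⟨MGenRaw.bR (min u v) (max u v), ⟨hlt, hmax⟩⟩ : MGen n sL sR)
        = betaSFTVal sL sR (min u v) (max u v) := rfl
    have hs : deltaStrVal sL sR hvisit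
        (⟨MGenRaw.bR (min u v) (max u v), ⟨hlt, hmax⟩⟩ : MGen n sL sR)
        = genBR sL sR (min u v) (max u v) ^ 2 := rfl
    rw [hstep]
    erw [hE]
    rw [hd, hs, inst_beta_q]
    have hgen : genBR sL sR (min u v) (max u v)
        = X (⟨MGenRaw.bR (min u v) (max u v), ⟨hlt, hmax⟩⟩ : MGen n sL sR) :=
      dif_pos ⟨hlt, hmax⟩
    rw [hgen]
    have hqq : qI sL sR (min u v) + qI sL sR (max u v) = qI sL sR u + qI sL sR v := by
      rcases lt_or_gt_of_ne hne with h | h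
      · rw [min_eq_left h.le, max_eq_right h.le]
      · rw [min_eq_right h.le, max_eq_left h.le, add_comm]
    rw [hqq]
    ring
  · have hvs : v = sL u := by rw [hv, pathSeq, if_neg hk]
    have hne : u ≠ v := fun he => hsLne u (by rw [← hvs, ← he])
    have hlt : min u v < max u v := min_lt_max.mpr hne
    have hmax : sL (min u v) = max u v := by
      rcases lt_or_gt_of_ne hne with h | h
      · rw [min_eq_left h.le, max_eq_right h.le, ← hvs]
      · rw [min_eq_right h.le, max_eq_left h.le, hvs, hsLinv]
    have hstep : stepGen sL sR k
        = X (⟨MGenRaw.bL (min u v) (max u v), ⟨hlt, hmax⟩⟩ : MGen n sL sR) := by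
      rw [stepGen, if_neg hk, ← hu, ← hv, genBL, dif_pos ⟨hlt, hmax⟩]
      rfl
    have hd : dSFTVal sL sR
        (⟨MGenRaw.bL (min u v) (max u v), ⟨hlt, hmax⟩⟩ : MGen n sL sR)
        = betaSFTVal sL sR (min u v) (max u v) := rfl
    have hs : deltaStrVal sL sR hvisit
        (⟨MGenRaw.bL (min u v) (max u v), ⟨hlt, hmax⟩⟩ : MGen n sL sR)
        = genBL sL sR (min u v) (max u v) ^ 2 := rfl
    rw [hstep]
    erw [hE]
    rw [hd, hs, inst_beta_q]
    have hgen : genBL sL sR (min u v) (max u v)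
        = X (⟨MGenRaw.bL (min u v) (max u v), ⟨hlt, hmax⟩⟩ : MGen n sL sR) :=
      dif_pos ⟨hlt, hmax⟩
    rw [hgen]
    have hqq : qI sL sR (min u v) + qI sL sR (max u v) = qI sL sR u + qI sL sR v := by
      rcases lt_or_gt_of_ne hne with h | h
      · rw [min_eq_left h.le, max_eq_right h.le]
      · rw [min_eq_right h.le, max_eq_left h.le, add_comm]
    rw [hqq]
    ring

include hE hsLne hsLinv hsRne hsRinv in
lemma inst_Egamma (i : Fin n) :
    E (gammaEl sL sR hvisit i)
      = gammaEl sL sR hvisit i ^ 2 + (qI sL sR 0 + qI sL sR i) := by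
  rw [gammaEl, map_sum,
    Finset.sum_congr rfl fun k _ => inst_Estep hvisit E hE hsLne hsLinv hsRne hsRinv k,
    Finset.sum_add_distrib, ← mdga_sq_sum,
    mdga_telescope (fun k => qI sL sR (pathSeq sL sR k)) (Nat.find (hvisit i))]
  rw [show pathSeq sL sR 0 = 0 from rfl, Nat.find_spec (hvisit i)]

include hE hsLne hsLinv hsRne hsRinv in
lemma inst_Egamma2 (i j : Fin n) :
    E (gammaEl sL sR hvisit i + gammaEl sL sR hvisit j)
      = (gammaEl sL sR hvisit i + gammaEl sL sR hvisit j) ^ 2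
        + qI sL sR i + qI sL sR j := by
  rw [map_add, inst_Egamma hvisit E hE hsLne hsLinv hsRne hsRinv i,
    inst_Egamma hvisit E hE hsLne hsLinv hsRne hsRinv j]
  linear_combination mdga_twoz (qI sL sR 0)
    - mdga_twoz (gammaEl sL sR hvisit i * gammaEl sL sR hvisit j)

lemma mdga_Esq (x : AM n sL sR) : E (x ^ 2) = 0 := by
  rw [pow_two, Derivation.leibniz, smul_eq_mul]
  exact mdga_twoz _

include hE hsLne hsLinv hsRne hsRinv in
lemma inst_gen (g : MGen n sL sR) : E (E (X g)) = 0 := by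
  have ha0 : ∀ i j : Fin n, ¬ i < j → genAR sL sR i j = 0 := fun i j h => genAR_zero h
  have hb0 : ∀ i j : Fin n, ¬ i < j → genAL sL sR i j = 0 := fun i j h => genAL_zero h
  have hEa := inst_EaR hvisit E hE
  have hEb := inst_EaL hvisit E hE
  have hEg := inst_Egamma2 hvisit E hE hsLne hsLinv hsRne hsRinv
  have hqR : ∀ i : Fin n, qI sL sR i
      = ∑ k, (genAL sL sR i k * genAR sL sR i k + genAL sL sR k i * genAR sL sR k i) :=
    fun i => rfl
  have hqL : ∀ i : Fin n, qI sL sR i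
      = ∑ k, (genAR sL sR i k * genAL sL sR i k + genAR sL sR k i * genAL sL sR k i) :=
    fun i => Finset.sum_congr rfl fun k _ => by ring
  have hmq : ∀ i : Fin n, E (qI sL sR i) = 0 := fun i => by
    rw [hqR i]
    exact mdga_master_q E (genAR sL sR) (genAL sL sR) (gammaEl sL sR hvisit)
      ha0 hb0 hEa hEb i
  obtain ⟨raw, hval⟩ := g
  cases raw with
  | aL i j =>
      have hij : i < j := hval
      have hX : genAL sL sR i j = X (⟨MGenRaw.aL i j, hval⟩ : MGen n sL sR) := dif_pos hij
      erw [← hX]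
      rw [hEb i j, if_pos hij]
      exact mdga_master_alpha E (genAL sL sR) (genAR sL sR) (gammaEl sL sR hvisit)
        (qI sL sR) hb0 ha0 hEb hEa hEg hqL i j hij
  | aR i j =>
      have hij : i < j := hval
      have hX : genAR sL sR i j = X (⟨MGenRaw.aR i j, hval⟩ : MGen n sL sR) := dif_pos hij
      erw [← hX]
      rw [hEa i j, if_pos hij]
      exact mdga_master_alpha E (genAR sL sR) (genAL sL sR) (gammaEl sL sR hvisit)
        (qI sL sR) ha0 hb0 hEa hEb hEg hqR i j hij
  | bL i j =>
      have hd : dSFTVal sL sR (⟨MGenRaw.bL i j, hval⟩ : MGen n sL sR)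
          = betaSFTVal sL sR i j := rfl
      have hs : deltaStrVal sL sR hvisit (⟨MGenRaw.bL i j, hval⟩ : MGen n sL sR)
          = genBL sL sR i j ^ 2 := rfl
      erw [hE]
      rw [hd, hs, inst_beta_q i j, map_add, map_add, hmq i, hmq j, mdga_Esq E]
      ring
  | bR i j =>
      have hd : dSFTVal sL sR (⟨MGenRaw.bR i j, hval⟩ : MGen n sL sR)
          = betaSFTVal sL sR i j := rfl
      have hs : deltaStrVal sL sR hvisit (⟨MGenRaw.bR i j, hval⟩ : MGen n sL sR)
          = genBR sL sR i j ^ 2 := rfl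
      erw [hE]
      rw [hd, hs, inst_beta_q i j, map_add, map_add, hmq i, hmq j, mdga_Esq E]
      ring

end WithDiff

end Instantiation


/-- The middle algebra with its full differential
`d^M = d^M_SFT + δ^M_str` is a DGA: `d^M ∘ d^M = 0`. -/
theorem middle_dM_squared_zero {n : ℕ} [NeZero n] (hn2 : 2 ≤ n) (hnEven : Even n)
    (sL sR : Equiv.Perm (Fin n))
    (hsLne : ∀ i, sL i ≠ i) (hsLinv : ∀ i, sL (sL i) = i)
    (hsRne : ∀ i, sR i ≠ i) (hsRinv : ∀ i, sR (sR i) = i)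
    (hvisit : ∀ i : Fin n, ∃ m, pathSeq sL sR m = i)
    (Dstr : Derivation (ZMod 2) (AM n sL sR) (AM n sL sR))
    (hDstr : ∀ g : MGen n sL sR, Dstr (X g) = deltaStrVal sL sR hvisit g)
    (Dsft : Derivation (ZMod 2) (AM n sL sR) (AM n sL sR))
    (hDsft : ∀ g : MGen n sL sR, Dsft (X g) = dSFTVal sL sR g) :
    ∀ x : AM n sL sR, Dsft (Dsft x + Dstr x) + Dstr (Dsft x + Dstr x) = 0 := by
  have hEX : ∀ g : MGen n sL sR,
      (Dsft + Dstr) (X g) = dSFTVal sL sR g + deltaStrVal sL sR hvisit g := fun g => by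
    rw [Derivation.add_apply, hDsft, hDstr]
  have hgen : ∀ g : MGen n sL sR, (Dsft + Dstr) ((Dsft + Dstr) (X g)) = 0 :=
    inst_gen hvisit (Dsft + Dstr) hEX hsLne hsLinv hsRne hsRinv
  suffices h : ∀ x : AM n sL sR, (Dsft + Dstr) ((Dsft + Dstr) x) = 0 by
    intro x
    have := h x
    rwa [Derivation.add_apply, Derivation.add_apply] at this
  intro x
  induction x using MvPolynomial.induction_on with
  | C a =>
      rw [show (MvPolynomial.C a : AM n sL sR) = algebraMap (ZMod 2) (AM n sL sR) a by
        rw [MvPolynomial.algebraMap_eq], Derivation.map_algebraMap, map_zero]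
  | add p q hp hq => rw [map_add, map_add, hp, hq, add_zero]
  | mul_X p i hp =>
      rw [Derivation.leibniz, smul_eq_mul, smul_eq_mul, map_add, Derivation.leibniz,
        Derivation.leibniz, smul_eq_mul, smul_eq_mul, smul_eq_mul, smul_eq_mul,
        hgen i, hp, mul_zero, mul_zero]
      linear_combination mdga_twoz (((Dsft + Dstr) (X i)) * ((Dsft + Dstr) p))
end

section
/- The SFT bracket on the middle algebra satisfies the Jacobi identity: for all x, y, z ∈ A^M, {x, {y, z}} + {y, {z, x}} + {z, {x, y}} = 0. -/
open MvPolynomial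

section SFTJacobiAux

variable {n : ℕ} (sL sR : Equiv.Perm (Fin n))

private lemma SFTaux_mvALAL (i j k l : Fin n) (h h') :
    mBrVal sL sR ⟨.aL i j, h⟩ ⟨.aL k l, h'⟩ =
    if hjk : j = k then X ⟨.aL i l, show MGenValid sL sR (.aL i l) from lt_trans (h : i < j) (hjk ▸ (h' : k < l))⟩
    else if hil : i = l then X ⟨.aL k j, show MGenValid sL sR (.aL k j) from lt_trans (h' : k < l) (hil ▸ (h : i < j))⟩
    else 0 := by
  show (if j = k then genAL sL sR i l else if i = l then genAL sL sR k j else 0) = _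
  split_ifs with h1 h2 <;> first | (unfold genAL; rw [dif_pos]) | rfl

private lemma SFTaux_mvARAR (i j k l : Fin n) (h h') :
    mBrVal sL sR ⟨.aR i j, h⟩ ⟨.aR k l, h'⟩ =
    if hjk : j = k then X ⟨.aR i l, show MGenValid sL sR (.aR i l) from lt_trans (h : i < j) (hjk ▸ (h' : k < l))⟩
    else if hil : i = l then X ⟨.aR k j, show MGenValid sL sR (.aR k j) from lt_trans (h' : k < l) (hil ▸ (h : i < j))⟩
    else 0 := by
  show (if j = k then genAR sL sR i l else if i = l then genAR sL sR k j else 0) = _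
  split_ifs with h1 h2 <;> first | (unfold genAR; rw [dif_pos]) | rfl

private lemma SFTaux_mvALBL (i j k l : Fin n) (h h') :
    mBrVal sL sR ⟨.aL i j, h⟩ ⟨.bL k l, h'⟩ =
    if Xor (i = k ∨ i = l) (j = k ∨ j = l) then X ⟨.aL i j, h⟩ else 0 := by
  show (if Xor (i = k ∨ i = l) (j = k ∨ j = l) then genAL sL sR i j else 0) = _
  split_ifs <;> first | (unfold genAL; rw [dif_pos]; assumption) | rfl

private lemma SFTaux_mvBLAL (k l i j : Fin n) (h h') :
    mBrVal sL sR ⟨.bL k l, h⟩ ⟨.aL i j, h'⟩ =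
    if Xor (i = k ∨ i = l) (j = k ∨ j = l) then X ⟨.aL i j, h'⟩ else 0 := by
  show (if Xor (i = k ∨ i = l) (j = k ∨ j = l) then genAL sL sR i j else 0) = _
  split_ifs <;> first | (unfold genAL; rw [dif_pos]; assumption) | rfl

private lemma SFTaux_mvARBR (i j k l : Fin n) (h h') :
    mBrVal sL sR ⟨.aR i j, h⟩ ⟨.bR k l, h'⟩ =
    if Xor (i = k ∨ i = l) (j = k ∨ j = l) then X ⟨.aR i j, h⟩ else 0 := by
  show (if Xor (i = k ∨ i = l) (j = k ∨ j = l) then genAR sL sR i j else 0) = _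
  split_ifs <;> first | (unfold genAR; rw [dif_pos]; assumption) | rfl

private lemma SFTaux_mvBRAR (k l i j : Fin n) (h h') :
    mBrVal sL sR ⟨.bR k l, h⟩ ⟨.aR i j, h'⟩ =
    if Xor (i = k ∨ i = l) (j = k ∨ j = l) then X ⟨.aR i j, h'⟩ else 0 := by
  show (if Xor (i = k ∨ i = l) (j = k ∨ j = l) then genAR sL sR i j else 0) = _
  split_ifs <;> first | (unfold genAR; rw [dif_pos]; assumption) | rfl

private lemma SFTaux_mvALAR (i j k l : Fin n) (h h') :
    mBrVal sL sR ⟨.aL i j, h⟩ ⟨.aR k l, h'⟩ = 0 := rfl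
private lemma SFTaux_mvARAL (i j k l : Fin n) (h h') :
    mBrVal sL sR ⟨.aR i j, h⟩ ⟨.aL k l, h'⟩ = 0 := rfl
private lemma SFTaux_mvALBR (i j k l : Fin n) (h h') :
    mBrVal sL sR ⟨.aL i j, h⟩ ⟨.bR k l, h'⟩ = 0 := rfl
private lemma SFTaux_mvBRAL (i j k l : Fin n) (h h') :
    mBrVal sL sR ⟨.bR i j, h⟩ ⟨.aL k l, h'⟩ = 0 := rfl
private lemma SFTaux_mvARBL (i j k l : Fin n) (h h') :
    mBrVal sL sR ⟨.aR i j, h⟩ ⟨.bL k l, h'⟩ = 0 := rfl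
private lemma SFTaux_mvBLAR (i j k l : Fin n) (h h') :
    mBrVal sL sR ⟨.bL i j, h⟩ ⟨.aR k l, h'⟩ = 0 := rfl
private lemma SFTaux_mvBLBL (i j k l : Fin n) (h h') :
    mBrVal sL sR ⟨.bL i j, h⟩ ⟨.bL k l, h'⟩ = 0 := rfl
private lemma SFTaux_mvBRBR (i j k l : Fin n) (h h') :
    mBrVal sL sR ⟨.bR i j, h⟩ ⟨.bR k l, h'⟩ = 0 := rfl
private lemma SFTaux_mvBLBR (i j k l : Fin n) (h h') :
    mBrVal sL sR ⟨.bL i j, h⟩ ⟨.bR k l, h'⟩ = 0 := rfl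
private lemma SFTaux_mvBRBL (i j k l : Fin n) (h h') :
    mBrVal sL sR ⟨.bR i j, h⟩ ⟨.bL k l, h'⟩ = 0 := rfl

private lemma SFTaux_mgvAL (i j : Fin n) : MGenValid sL sR (.aL i j) ↔ i < j := Iff.rfl
private lemma SFTaux_mgvAR (i j : Fin n) : MGenValid sL sR (.aR i j) ↔ i < j := Iff.rfl
private lemma SFTaux_mgvBL (i j : Fin n) :
    MGenValid sL sR (.bL i j) ↔ i < j ∧ sL i = j := Iff.rfl
private lemma SFTaux_mgvBR (i j : Fin n) :
    MGenValid sL sR (.bR i j) ↔ i < j ∧ sR i = j := Iff.rfl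

set_option maxHeartbeats 12000000 in
private lemma SFTaux_jac_gen (Br : AM n sL sR → AM n sL sR → AM n sL sR)
    (hsym : ∀ x y, Br x y = Br y x)
    (hadd : ∀ x y z, Br x (y + z) = Br x y + Br x z)
    (hmul : ∀ x y z, Br x (y * z) = Br x y * z + y * Br x z)
    (hgen : ∀ g g' : MGen n sL sR, Br (X g) (X g') = mBrVal sL sR g g')
    (a b c : MGen n sL sR) :
    Br (X a) (Br (X b) (X c)) + Br (X b) (Br (X c) (X a)) + Br (X c) (Br (X a) (X b)) = 0 := by
  have hz : ∀ x, Br x 0 = 0 := by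
    intro x
    have h := hadd x 0 0
    rw [add_zero] at h
    nth_rewrite 1 [← add_zero (Br x 0)] at h
    exact (add_left_cancel h).symm
  have h2 : (2 : AM n sL sR) = 0 := by
    simpa using CharP.cast_eq_zero (AM n sL sR) 2
  have haa : ∀ x : AM n sL sR, x + x = 0 := by
    intro x; linear_combination x * h2
  obtain ⟨ra, ha⟩ := a
  obtain ⟨rb, hb⟩ := b
  obtain ⟨rc, hc⟩ := c
  have hgen' : ∀ g g' : {g : MGenRaw n // MGenValid sL sR g},
      Br (X g) (X g') = mBrVal sL sR g g' := hgen
  cases ra <;> cases rb <;> cases rc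
  all_goals simp only [hgen, hgen', SFTaux_mvALAL, SFTaux_mvARAR, SFTaux_mvALBL, SFTaux_mvBLAL,
    SFTaux_mvARBR, SFTaux_mvBRAR, SFTaux_mvALAR, SFTaux_mvARAL, SFTaux_mvALBR, SFTaux_mvBRAL,
    SFTaux_mvARBL, SFTaux_mvBLAR, SFTaux_mvBLBL, SFTaux_mvBRBR, SFTaux_mvBLBR, SFTaux_mvBRBL, hz]
  all_goals try split_ifs
  all_goals try simp only [hz, hgen, hgen', SFTaux_mvALAL, SFTaux_mvARAR, SFTaux_mvALBL, SFTaux_mvBLAL,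
    SFTaux_mvARBR, SFTaux_mvBRAR, SFTaux_mvALAR, SFTaux_mvARAL, SFTaux_mvALBR, SFTaux_mvBRAL,
    SFTaux_mvARBL, SFTaux_mvBLAR, SFTaux_mvBLBL, SFTaux_mvBRBR, SFTaux_mvBLBR, SFTaux_mvBRBL]
  all_goals try split_ifs
  all_goals try subst_vars
  all_goals try simp only [add_zero, zero_add]
  all_goals try exact haa _
  all_goals (exfalso; clear hz haa hgen hgen' hsym hadd hmul h2; simp only [SFTaux_mgvAL, SFTaux_mgvAR, SFTaux_mgvBL, SFTaux_mgvBR, Xor, not_or, not_and, not_lt, ne_eq, not_true, not_false_iff, Fin.lt_def, Fin.ext_iff] at * <;> omega)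

end SFTJacobiAux

/-- The SFT bracket on the middle algebra satisfies the Jacobi identity. -/
theorem middle_bracket_jacobi {n : ℕ} [NeZero n] (hn2 : 2 ≤ n) (hnEven : Even n)
    (sL sR : Equiv.Perm (Fin n))
    (hsLne : ∀ i, sL i ≠ i) (hsLinv : ∀ i, sL (sL i) = i)
    (hsRne : ∀ i, sR i ≠ i) (hsRinv : ∀ i, sR (sR i) = i)
    (hvisit : ∀ i : Fin n, ∃ m, pathSeq sL sR m = i)
    (Br : AM n sL sR → AM n sL sR → AM n sL sR)
    (hBr : IsSFTBracket sL sR Br) :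
    ∀ x y z : AM n sL sR, Br x (Br y z) + Br y (Br z x) + Br z (Br x y) = 0 := by
  obtain ⟨hsym, hadd, hmul, hgen⟩ := hBr
  set J : AM n sL sR → AM n sL sR → AM n sL sR → AM n sL sR :=
    fun x y z => Br x (Br y z) + Br y (Br z x) + Br z (Br x y) with hJ
  suffices h : ∀ x y z, J x y z = 0 by
    intro x y z; exact h x y z
  have hz : ∀ x, Br x 0 = 0 := by
    intro x
    have h := hadd x 0 0
    rw [add_zero] at h
    nth_rewrite 1 [← add_zero (Br x 0)] at h
    exact (add_left_cancel h).symm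
  have h2 : (2 : AM n sL sR) = 0 := by
    simpa using CharP.cast_eq_zero (AM n sL sR) 2
  have hone : ∀ x, Br x 1 = 0 := by
    intro x
    have h := hmul x 1 1
    simp only [mul_one, one_mul] at h
    nth_rewrite 1 [← add_zero (Br x 1)] at h
    exact (add_left_cancel h).symm
  have hC : ∀ (x : AM n sL sR) (a : ZMod 2), Br x (C a) = 0 := by
    intro x a
    rcases (by decide : ∀ a : ZMod 2, a = 0 ∨ a = 1) a with h | h <;> subst h
    · rw [map_zero]; exact hz x
    · rw [map_one]; exact hone x
  have jswap23 : ∀ x y z, J x y z = J x z y := by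
    intro x y z
    simp only [hJ]
    rw [show Br z y = Br y z from hsym z y, show Br y x = Br x y from hsym y x,
      show Br x z = Br z x from hsym x z]
    ring
  have jswap12 : ∀ x y z, J x y z = J y x z := by
    intro x y z
    simp only [hJ]
    rw [show Br x z = Br z x from hsym x z, show Br z y = Br y z from hsym z y,
      show Br y x = Br x y from hsym y x]
    ring
  have cyc : ∀ u v w, J u v w = J w u v := by
    intro u v w; rw [jswap23 u v w, jswap12 u w v]
  have jadd3 : ∀ x y p q, J x y (p + q) = J x y p + J x y q := by
    intro x y p q
    simp only [hJ]
    have e1 : Br (p + q) x = Br p x + Br q x := by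
      rw [hsym (p + q) x, hadd x p q, hsym x p, hsym x q]
    have e2 : Br (p + q) (Br x y) = Br p (Br x y) + Br q (Br x y) := by
      rw [hsym (p + q) (Br x y), hadd (Br x y) p q, hsym (Br x y) p, hsym (Br x y) q]
    rw [hadd y p q, hadd x (Br y p) (Br y q), e1, hadd y (Br p x) (Br q x), e2]
    ring
  have jC3 : ∀ x y a, J x y (C a) = 0 := by
    intro x y a
    simp only [hJ]
    rw [hC y a, hz x, hsym (C a) x, hC x a, hz y, hsym (C a) (Br x y), hC (Br x y) a]
    simp
  have jmul3 : ∀ x y p q, J x y (p * q) = J x y p * q + p * J x y q := by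
    intro x y p q
    simp only [hJ]
    have e1 : Br (p * q) x = Br x p * q + p * Br x q := by
      rw [hsym (p * q) x, hmul x p q]
    have e2 : Br (p * q) (Br x y) = Br p (Br x y) * q + p * Br q (Br x y) := by
      rw [hsym (p * q) (Br x y), hmul (Br x y) p q, hsym (Br x y) p, hsym (Br x y) q]
    rw [hmul y p q, hadd x (Br y p * q) (p * Br y q), hmul x (Br y p) q, hmul x p (Br y q),
      e1, hadd y (Br x p * q) (p * Br x q), hmul y (Br x p) q, hmul y p (Br x q), e2,
      hsym p x, hsym q x]
    linear_combination (Br y p * Br x q + Br x p * Br y q) * h2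
  have jgen : ∀ a b c : MGen n sL sR, J (X a) (X b) (X c) = 0 := by
    intro a b c
    simp only [hJ]
    exact SFTaux_jac_gen sL sR Br hsym hadd hmul hgen a b c
  have j1 : ∀ (a b : MGen n sL sR) z, J (X a) (X b) z = 0 := by
    intro a b z
    induction z using MvPolynomial.induction_on with
    | C r => exact jC3 _ _ r
    | add p q hp hq => rw [jadd3, hp, hq, add_zero]
    | mul_X p g hp => rw [jmul3, hp, jgen a b g, zero_mul, mul_zero, add_zero]
  have j2 : ∀ (a : MGen n sL sR) y z, J (X a) y z = 0 := by
    intro a y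
    induction y using MvPolynomial.induction_on with
    | C r => intro z; rw [jswap23 _ _ _, jC3]
    | add p q hp hq =>
        intro z
        rw [jswap23 (X a) (p + q) z, jadd3, jswap23 (X a) z p, jswap23 (X a) z q, hp z, hq z,
          add_zero]
    | mul_X p g hp =>
        intro z
        rw [jswap23 (X a) (p * X g) z, jmul3, jswap23 (X a) z p, hp z, jswap23 (X a) z (X g),
          j1 a g z, zero_mul, mul_zero, add_zero]
  intro x
  induction x using MvPolynomial.induction_on with
  | C r => intro y z; rw [jswap12 (C r) y z, jswap23 y (C r) z, jC3]
  | add p q hp hq =>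
      intro y z
      rw [← cyc y z (p + q), jadd3 y z p q, cyc y z p, cyc y z q, hp y z, hq y z, add_zero]
  | mul_X p g hp =>
      intro y z
      rw [← cyc y z (p * X g), jmul3 y z p (X g), cyc y z p, hp y z, cyc y z (X g), j2 g y z,
        zero_mul, mul_zero, add_zero]
end

section
/- The SFT differential on the middle algebra is given by bracketing with the Hamiltonian: for all x ∈ A^M, d^M_SFT(x) = {h^M, x}. -/
open MvPolynomial

section AuxSFT

open Finset in
lemma collapse_j' {M : Type*} [AddCommMonoid M] {n : ℕ} (c : Fin n) (C : Fin n → Prop)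
    [DecidablePred C] (f : Fin n → Fin n → M) :
    (∑ i : Fin n, ∑ j : Fin n, if j = c ∧ C i then f i j else 0)
      = ∑ i : Fin n, if C i then f i c else 0 := by
  refine Finset.sum_congr rfl fun i _ => ?_
  simp [ite_and, Finset.sum_ite_eq']

open Finset in
lemma collapse_i' {M : Type*} [AddCommMonoid M] {n : ℕ} (c : Fin n) (C : Fin n → Prop)
    [DecidablePred C] (f : Fin n → Fin n → M) :
    (∑ i : Fin n, ∑ j : Fin n, if i = c ∧ C j then f i j else 0)
      = ∑ j : Fin n, if C j then f c j else 0 := by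
  rw [Finset.sum_comm]; exact collapse_j' c C (fun j i => f i j)

variable {n : ℕ} (sL sR : Equiv.Perm (Fin n))

lemma mBr_aR_aL (p q i j : Fin n) (h : MGenValid sL sR (.aR p q))
    (h' : i < j) :
    mBrVal sL sR ⟨.aR p q, h⟩ ⟨.aL i j, h'⟩ = 0 := rfl

lemma mBr_aR_aR (p q i j : Fin n) (h : MGenValid sL sR (.aR p q))
    (h' : i < j) :
    mBrVal sL sR ⟨.aR p q, h⟩ ⟨.aR i j, h'⟩
      = if q = i then genAR sL sR p j else if p = j then genAR sL sR i q else 0 := rfl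

lemma mBr_aL_aL (p q i j : Fin n) (h : MGenValid sL sR (.aL p q))
    (h' : i < j) :
    mBrVal sL sR ⟨.aL p q, h⟩ ⟨.aL i j, h'⟩
      = if q = i then genAL sL sR p j else if p = j then genAL sL sR i q else 0 := rfl

lemma mBr_aL_aR (p q i j : Fin n) (h : MGenValid sL sR (.aL p q))
    (h' : i < j) :
    mBrVal sL sR ⟨.aL p q, h⟩ ⟨.aR i j, h'⟩ = 0 := rfl

lemma mBr_bL_aL (p q i j : Fin n) (h : MGenValid sL sR (.bL p q))
    (h' : i < j) :
    mBrVal sL sR ⟨.bL p q, h⟩ ⟨.aL i j, h'⟩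
      = if Xor (i = p ∨ i = q) (j = p ∨ j = q) then genAL sL sR i j else 0 := rfl

lemma mBr_bL_aR (p q i j : Fin n) (h : MGenValid sL sR (.bL p q))
    (h' : i < j) :
    mBrVal sL sR ⟨.bL p q, h⟩ ⟨.aR i j, h'⟩ = 0 := rfl

lemma mBr_bR_aL (p q i j : Fin n) (h : MGenValid sL sR (.bR p q))
    (h' : i < j) :
    mBrVal sL sR ⟨.bR p q, h⟩ ⟨.aL i j, h'⟩ = 0 := rfl

lemma mBr_bR_aR (p q i j : Fin n) (h : MGenValid sL sR (.bR p q))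
    (h' : i < j) :
    mBrVal sL sR ⟨.bR p q, h⟩ ⟨.aR i j, h'⟩
      = if Xor (i = p ∨ i = q) (j = p ∨ j = q) then genAR sL sR i j else 0 := rfl

lemma pt_aL {n : ℕ} (sL sR : Equiv.Perm (Fin n)) (p q : Fin n) (hpq : p < q) (i j : Fin n) :
    (if h : i < j then
        (if q = i then genAL sL sR p j else if p = j then genAL sL sR i q else 0)
          * genAR sL sR i j
      else (0 : AM n sL sR))
    = (if i = q ∧ q < j then genAL sL sR p j * genAR sL sR i j else 0)
      + (if j = p ∧ i < p then genAL sL sR i q * genAR sL sR i j else 0) := by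
  split_ifs <;>
    first
      | ring1
      | (exfalso;
         simp only [Fin.lt_def, Fin.ext_iff, not_and, not_or, not_lt, ne_eq] at *;
         omega)

lemma pt_aR {n : ℕ} (sL sR : Equiv.Perm (Fin n)) (p q : Fin n) (hpq : p < q) (i j : Fin n) :
    (if h : i < j then
        genAL sL sR i j *
          (if q = i then genAR sL sR p j else if p = j then genAR sL sR i q else 0)
      else (0 : AM n sL sR))
    = (if i = q ∧ q < j then genAL sL sR i j * genAR sL sR p j else 0)
      + (if j = p ∧ i < p then genAL sL sR i j * genAR sL sR i q else 0) := by
  split_ifs <;>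
    first
      | ring1
      | (exfalso;
         simp only [Fin.lt_def, Fin.ext_iff, not_and, not_or, not_lt, ne_eq] at *;
         omega)

lemma pt_bL {n : ℕ} (sL sR : Equiv.Perm (Fin n)) (p q : Fin n) (hpq : p < q) (i j : Fin n) :
    (if h : i < j then
        (if Xor (i = p ∨ i = q) (j = p ∨ j = q) then genAL sL sR i j else 0)
          * genAR sL sR i j
      else (0 : AM n sL sR))
    = (if j = p ∧ i < p then genAL sL sR i j * genAR sL sR i j else 0)
      + (if i = p ∧ (p < j ∧ j ≠ q) then genAL sL sR i j * genAR sL sR i j else 0)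
      + (if j = q ∧ (i < q ∧ i ≠ p) then genAL sL sR i j * genAR sL sR i j else 0)
      + (if i = q ∧ q < j then genAL sL sR i j * genAR sL sR i j else 0) := by
  split_ifs <;>
    first
      | ring1
      | (exfalso;
         simp only [Xor, Fin.lt_def, Fin.ext_iff, not_and, not_or, not_lt, ne_eq] at *;
         omega)

lemma pt_bR {n : ℕ} (sL sR : Equiv.Perm (Fin n)) (p q : Fin n) (hpq : p < q) (i j : Fin n) :
    (if h : i < j then
        genAL sL sR i j *
          (if Xor (i = p ∨ i = q) (j = p ∨ j = q) then genAR sL sR i j else 0)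
      else (0 : AM n sL sR))
    = (if j = p ∧ i < p then genAL sL sR i j * genAR sL sR i j else 0)
      + (if i = p ∧ (p < j ∧ j ≠ q) then genAL sL sR i j * genAR sL sR i j else 0)
      + (if j = q ∧ (i < q ∧ i ≠ p) then genAL sL sR i j * genAR sL sR i j else 0)
      + (if i = q ∧ q < j then genAL sL sR i j * genAR sL sR i j else 0) := by
  split_ifs <;>
    first
      | ring1
      | (exfalso;
         simp only [Xor, Fin.lt_def, Fin.ext_iff, not_and, not_or, not_lt, ne_eq] at *;
         omega)

end AuxSFT

/-- The SFT differential on the middle algebra is bracketing with `h^M`. -/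
theorem middle_dSFT_eq_bracket_ham {n : ℕ} [NeZero n] (hn2 : 2 ≤ n) (hnEven : Even n)
    (sL sR : Equiv.Perm (Fin n))
    (hsLne : ∀ i, sL i ≠ i) (hsLinv : ∀ i, sL (sL i) = i)
    (hsRne : ∀ i, sR i ≠ i) (hsRinv : ∀ i, sR (sR i) = i)
    (hvisit : ∀ i : Fin n, ∃ m, pathSeq sL sR m = i)
    (Dsft : Derivation (ZMod 2) (AM n sL sR) (AM n sL sR))
    (hDsft : ∀ g : MGen n sL sR, Dsft (X g) = dSFTVal sL sR g)
    (Br : AM n sL sR → AM n sL sR → AM n sL sR)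
    (hBr : IsSFTBracket sL sR Br) :
    ∀ x : AM n sL sR, Dsft x = Br (hamM sL sR) x := by
  obtain ⟨hsym, hadd, hmul, hgen⟩ := hBr
  have hzero : ∀ x : AM n sL sR, Br x 0 = 0 := by
    intro x
    have h := hadd x 0 0
    rw [add_zero] at h
    exact (add_eq_left.mp h.symm)
  have hone : ∀ x : AM n sL sR, Br x 1 = 0 := by
    intro x
    have h := hmul x 1 1
    rw [mul_one, mul_one, one_mul] at h
    exact (add_eq_left.mp h.symm)
  have hsum : ∀ {α : Type} (x : AM n sL sR) (s : Finset α) (f : α → AM n sL sR),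
      Br x (∑ a ∈ s, f a) = ∑ a ∈ s, Br x (f a) := by
    intro α x s f
    classical
    induction s using Finset.induction_on with
    | empty => simpa using hzero x
    | @insert a s ha ih => rw [Finset.sum_insert ha, Finset.sum_insert ha, hadd, ih]
  have hham : ∀ g : MGen n sL sR, Br (hamM sL sR) (X g)
      = ∑ i : Fin n, ∑ j : Fin n,
          (if h : i < j then
              mBrVal sL sR g ⟨.aL i j, h⟩ * genAR sL sR i j
                + genAL sL sR i j * mBrVal sL sR g ⟨.aR i j, h⟩
            else 0) := by
    intro g
    rw [hsym, hamM, hsum]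
    refine Finset.sum_congr rfl fun i _ => ?_
    rw [hsum]
    refine Finset.sum_congr rfl fun j _ => ?_
    by_cases h : i < j
    · rw [if_pos h, dif_pos h]
      have hA : genAL sL sR i j = X (⟨.aL i j, h⟩ : MGen n sL sR) := dif_pos h
      have hR : genAR sL sR i j = X (⟨.aR i j, h⟩ : MGen n sL sR) := dif_pos h
      rw [hA, hR]
      have e1 := hgen g ⟨.aL i j, h⟩
      have e2 := hgen g ⟨.aR i j, h⟩
      have e3 := hmul (X g) (X (⟨.aL i j, h⟩ : MGen n sL sR)) (X (⟨.aR i j, h⟩ : MGen n sL sR))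
      rw [e1, e2] at e3
      exact e3
    · rw [if_neg h, dif_neg h, hzero]
  have hkey : ∀ g : MGen n sL sR, Br (hamM sL sR) (X g) = dSFTVal sL sR g := by
    rintro ⟨raw, hval⟩
    refine (hham ⟨raw, hval⟩).trans ?_
    revert hval
    cases raw with
    | aL p q =>
      intro hval
      have hpq : p < q := hval
      simp only [mBr_aL_aL, mBr_aL_aR, dSFTVal, mul_zero, add_zero]
      rw [Finset.sum_congr rfl fun i _ => Finset.sum_congr rfl fun j _ => pt_aL sL sR p q hpq i j]
      simp only [Finset.sum_add_distrib]
      rw [collapse_i' q (fun j => q < j) (fun i j => genAL sL sR p j * genAR sL sR i j),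
        collapse_j' p (fun i => i < p) (fun i j => genAL sL sR i q * genAR sL sR i j)]
    | aR p q =>
      intro hval
      have hpq : p < q := hval
      simp only [mBr_aR_aL, mBr_aR_aR, dSFTVal, zero_mul, zero_add]
      rw [Finset.sum_congr rfl fun i _ => Finset.sum_congr rfl fun j _ => pt_aR sL sR p q hpq i j]
      simp only [Finset.sum_add_distrib]
      rw [collapse_i' q (fun j => q < j) (fun i j => genAL sL sR i j * genAR sL sR p j),
        collapse_j' p (fun i => i < p) (fun i j => genAL sL sR i j * genAR sL sR i q)]
      congr 1 <;> exact Finset.sum_congr rfl fun k _ => by split_ifs <;> ring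
    | bL p q =>
      intro hval
      have hpq : p < q := hval.1
      simp only [mBr_bL_aL, mBr_bL_aR, dSFTVal, betaSFTVal, mul_zero, add_zero]
      rw [Finset.sum_congr rfl fun i _ => Finset.sum_congr rfl fun j _ => pt_bL sL sR p q hpq i j]
      simp only [Finset.sum_add_distrib]
      rw [collapse_j' p (fun i => i < p) (fun i j => genAL sL sR i j * genAR sL sR i j),
        collapse_i' p (fun j => p < j ∧ j ≠ q) (fun i j => genAL sL sR i j * genAR sL sR i j),
        collapse_j' q (fun i => i < q ∧ i ≠ p) (fun i j => genAL sL sR i j * genAR sL sR i j),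
        collapse_i' q (fun j => q < j) (fun i j => genAL sL sR i j * genAR sL sR i j)]
    | bR p q =>
      intro hval
      have hpq : p < q := hval.1
      simp only [mBr_bR_aL, mBr_bR_aR, dSFTVal, betaSFTVal, zero_mul, zero_add]
      rw [Finset.sum_congr rfl fun i _ => Finset.sum_congr rfl fun j _ => pt_bR sL sR p q hpq i j]
      simp only [Finset.sum_add_distrib]
      rw [collapse_j' p (fun i => i < p) (fun i j => genAL sL sR i j * genAR sL sR i j),
        collapse_i' p (fun j => p < j ∧ j ≠ q) (fun i j => genAL sL sR i j * genAR sL sR i j),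
        collapse_j' q (fun i => i < q ∧ i ≠ p) (fun i j => genAL sL sR i j * genAR sL sR i j),
        collapse_i' q (fun j => q < j) (fun i j => genAL sL sR i j * genAR sL sR i j)]
  intro x
  induction x using MvPolynomial.induction_on with
  | C a =>
    have ha : a = 0 ∨ a = 1 := by revert a; decide
    have hD : Dsft (C a : AM n sL sR) = 0 := Dsft.map_algebraMap a
    rcases ha with rfl | rfl
    · rw [hD, map_zero, hzero]
    · rw [hD, map_one, hone]
  | add p q hp hq => rw [map_add, hadd, hp, hq]
  | mul_X p g hp =>
    rw [Dsft.leibniz, smul_eq_mul, smul_eq_mul, hmul, hp, hDsft g, ← hkey g]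
    ring
end

section
/- The string differential on the middle algebra is a derivation of the SFT bracket: for all x, y ∈ A^M, δ^M_str({x, y}) = {δ^M_str(x), y} + {x, δ^M_str(y)}. -/
open MvPolynomial

namespace SFTProof

variable {n : ℕ} [NeZero n] {sL sR : Equiv.Perm (Fin n)}
set_option linter.unusedSectionVars false

lemma pathSeq_succ (k : ℕ) :
    pathSeq sL sR (k+1) = if k % 2 = 0 then sR (pathSeq sL sR k) else sL (pathSeq sL sR k) := rfl

lemma pathSeq_back (hsLinv : ∀ i, sL (sL i) = i) (hsRinv : ∀ i, sR (sR i) = i) (k : ℕ) :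
    pathSeq sL sR k
      = if k % 2 = 0 then sR (pathSeq sL sR (k+1)) else sL (pathSeq sL sR (k+1)) := by
  rw [pathSeq_succ]
  split_ifs
  · rw [hsRinv]
  · rw [hsLinv]

lemma pathSeq_det {a b : ℕ} (hp : a % 2 = b % 2) (h : pathSeq sL sR a = pathSeq sL sR b) :
    ∀ t, pathSeq sL sR (a + t) = pathSeq sL sR (b + t) := by
  intro t
  induction t with
  | zero => simpa using h
  | succ t ih =>
      have hpar : (a + t) % 2 = (b + t) % 2 := by omega
      rw [show a + (t+1) = (a+t)+1 by ring, show b + (t+1) = (b+t)+1 by ring,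
        pathSeq_succ, pathSeq_succ, hpar, ih]

lemma pathSeq_same_parity_false (hvisit : ∀ i : Fin n, ∃ m, pathSeq sL sR m = i)
    {a b : ℕ} (hab : a < b) (hb : b < n) (hpar : a % 2 = b % 2)
    (heq : pathSeq sL sR a = pathSeq sL sR b) : False := by
  set p := b - a with hpdef
  have hp0 : 0 < p := by omega
  have hdet := pathSeq_det hpar heq
  have hper : ∀ s, pathSeq sL sR (a + s + p) = pathSeq sL sR (a + s) := by
    intro s
    have := hdet s
    rw [show b + s = a + s + p by omega] at this
    exact this.symm
  have hmod : ∀ m, pathSeq sL sR (a + m) = pathSeq sL sR (a + m % p) := by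
    intro m
    induction m using Nat.strong_induction_on with
    | _ m ih =>
      by_cases hm : m < p
      · rw [Nat.mod_eq_of_lt hm]
      · push_neg at hm
        have h1 : pathSeq sL sR (a + m) = pathSeq sL sR (a + (m - p)) := by
          have := hper (m - p)
          rw [show a + (m - p) + p = a + m by omega] at this
          exact this
        rw [h1, ih (m - p) (by omega), Nat.mod_eq_sub_mod hm]
  have hcover : ∀ i : Fin n, ∃ u, u < b ∧ pathSeq sL sR u = i := by
    intro i
    obtain ⟨m, hm⟩ := hvisit i
    by_cases h : m < b
    · exact ⟨m, h, hm⟩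
    · push_neg at h
      refine ⟨a + (m - a) % p, by have := Nat.mod_lt (m - a) hp0; omega, ?_⟩
      rw [← hmod, show a + (m - a) = m by omega, hm]
  have hsub : (Finset.univ : Finset (Fin n)) ⊆ (Finset.range b).image (pathSeq sL sR) := by
    intro i _
    obtain ⟨u, hu, he⟩ := hcover i
    exact Finset.mem_image.2 ⟨u, Finset.mem_range.2 hu, he⟩
  have hcard := Finset.card_le_card hsub
  rw [Finset.card_univ, Fintype.card_fin] at hcard
  have := Finset.card_image_le (s := Finset.range b) (f := pathSeq sL sR)
  rw [Finset.card_range] at this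
  omega

lemma pathSeq_opp_parity_false
    (hsLne : ∀ i, sL i ≠ i) (hsLinv : ∀ i, sL (sL i) = i)
    (hsRne : ∀ i, sR i ≠ i) (hsRinv : ∀ i, sR (sR i) = i)
    {a b : ℕ} (hab : a < b) (hpar : a % 2 ≠ b % 2)
    (heq : pathSeq sL sR a = pathSeq sL sR b) : False := by
  have claim : ∀ m, m ≤ b - a → pathSeq sL sR (a + m) = pathSeq sL sR (b - m) := by
    intro m
    induction m with
    | zero => intro _; simpa using heq
    | succ m ih =>
        intro hm
        have h1 := ih (by omega)
        have e2 : pathSeq sL sR (b - m - 1)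
            = if (b - m - 1) % 2 = 0 then sR (pathSeq sL sR (b - m))
              else sL (pathSeq sL sR (b - m)) := by
          have := pathSeq_back hsLinv hsRinv (b - m - 1)
          rw [show b - m - 1 + 1 = b - m by omega] at this
          exact this
        have hp2 : (a + m) % 2 = (b - m - 1) % 2 := by omega
        rw [show a + (m+1) = (a+m)+1 by ring, show b - (m+1) = b - m - 1 by omega,
          pathSeq_succ, e2, hp2]
        split_ifs <;> rw [h1]
  set m := (b - a) / 2 with hmdef
  have hm : m ≤ b - a := by omega
  have hba : b - m = a + m + 1 := by omega
  have h2 : pathSeq sL sR (a + m + 1) = pathSeq sL sR (a + m) := by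
    rw [← hba]
    exact (claim m hm).symm
  rw [pathSeq_succ] at h2
  split_ifs at h2
  exacts [hsRne _ h2, hsLne _ h2]

lemma pathSeq_inj
    (hsLne : ∀ i, sL i ≠ i) (hsLinv : ∀ i, sL (sL i) = i)
    (hsRne : ∀ i, sR i ≠ i) (hsRinv : ∀ i, sR (sR i) = i)
    (hvisit : ∀ i : Fin n, ∃ m, pathSeq sL sR m = i)
    {a b : ℕ} (ha : a < n) (hb : b < n)
    (heq : pathSeq sL sR a = pathSeq sL sR b) : a = b := by
  by_contra hne
  rcases Nat.lt_or_ge a b with h | h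
  · by_cases hpar : a % 2 = b % 2
    · exact pathSeq_same_parity_false hvisit h hb hpar heq
    · exact pathSeq_opp_parity_false hsLne hsLinv hsRne hsRinv h hpar heq
  · have h' : b < a := by omega
    by_cases hpar : b % 2 = a % 2
    · exact pathSeq_same_parity_false hvisit h' ha hpar heq.symm
    · exact pathSeq_opp_parity_false hsLne hsLinv hsRne hsRinv h' hpar heq.symm

end SFTProof
namespace SFTProof

variable {n : ℕ} [NeZero n] {sL sR : Equiv.Perm (Fin n)}
variable (hsLne : ∀ i, sL i ≠ i) (hsLinv : ∀ i, sL (sL i) = i)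
variable (hsRne : ∀ i, sR i ≠ i) (hsRinv : ∀ i, sR (sR i) = i)
variable (hvisit : ∀ i : Fin n, ∃ m, pathSeq sL sR m = i)

/-- first-occurrence time. -/
noncomputable def T (hvisit : ∀ i : Fin n, ∃ m, pathSeq sL sR m = i) (i : Fin n) : ℕ :=
  Nat.find (hvisit i)

lemma pathSeq_T (i : Fin n) : pathSeq sL sR (T hvisit i) = i := Nat.find_spec (hvisit i)

include hsLne hsLinv hsRne hsRinv in
lemma T_lt (i : Fin n) : T hvisit i < n := by
  have hinj : Function.Injective (fun t : Fin n => pathSeq sL sR t.val) := by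
    intro a b h
    exact Fin.ext (pathSeq_inj hsLne hsLinv hsRne hsRinv hvisit a.isLt b.isLt h)
  have hsurj := (Finite.injective_iff_surjective).1 hinj
  obtain ⟨t, ht⟩ := hsurj i
  have : T hvisit i ≤ t.val := Nat.find_min' (hvisit i) ht
  omega

include hsLne hsLinv hsRne hsRinv in
lemma T_eq_iff {t : ℕ} (ht : t < n) (i : Fin n) :
    pathSeq sL sR t = i ↔ t = T hvisit i := by
  constructor
  · intro h
    exact pathSeq_inj hsLne hsLinv hsRne hsRinv hvisit ht
      (T_lt hsLne hsLinv hsRne hsRinv hvisit i) (h.trans (pathSeq_T hvisit i).symm)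
  · rintro rfl
    exact pathSeq_T hvisit i

lemma T_zero : T hvisit (0 : Fin n) = 0 := by
  have : pathSeq sL sR 0 = (0 : Fin n) := rfl
  exact Nat.eq_zero_of_le_zero (Nat.find_min' (hvisit 0) this)

lemma T_eq_zero_iff (i : Fin n) : T hvisit i = 0 ↔ i = 0 := by
  constructor
  · intro h
    have := pathSeq_T hvisit i
    rw [h] at this
    exact this.symm
  · rintro rfl
    exact T_zero hvisit

include hsLne hsLinv hsRne hsRinv in
lemma T_inj {i j : Fin n} (h : T hvisit i = T hvisit j) : i = j := by
  have h1 := pathSeq_T hvisit i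
  have h2 := pathSeq_T hvisit j
  rw [h] at h1
  rw [h1] at h2
  exact h2

end SFTProof
attribute [reducible] MGenValid MGen

namespace SFTProof

set_option linter.unusedSectionVars false

section BrBasics

variable {n : ℕ} [NeZero n] {sL sR : Equiv.Perm (Fin n)}
variable {Br : AM n sL sR → AM n sL sR → AM n sL sR} (hBr : IsSFTBracket sL sR Br)
lemma one_add_one_eq_zero : (1 + 1 : AM n sL sR) = 0 := by
  rw [← C_1, ← C_add, show ((1 : ZMod 2) + 1) = 0 from by decide, C_0]

lemma add_self_zero (a : AM n sL sR) : a + a = 0 := by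
  rw [← one_mul a, ← add_mul, one_add_one_eq_zero, zero_mul]

include hBr

lemma br_symm : ∀ x y, Br x y = Br y x := hBr.1
lemma br_add : ∀ x y z, Br x (y + z) = Br x y + Br x z := hBr.2.1
lemma br_mul : ∀ x y z, Br x (y * z) = Br x y * z + y * Br x z := hBr.2.2.1
lemma br_gen : ∀ g g' : MGen n sL sR, Br (X g) (X g') = mBrVal sL sR g g' := hBr.2.2.2

lemma br_add_left (x y z : AM n sL sR) : Br (x + y) z = Br x z + Br y z := by
  rw [br_symm hBr, br_add hBr, br_symm hBr z x, br_symm hBr z y]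

lemma br_mul_left (x y z : AM n sL sR) : Br (x * y) z = Br x z * y + x * Br y z := by
  rw [br_symm hBr, br_mul hBr, br_symm hBr z x, br_symm hBr z y]

lemma br_zero (x : AM n sL sR) : Br x 0 = 0 := by
  have h := br_add hBr x 0 0
  rw [add_zero] at h
  exact left_eq_add.1 h

lemma br_zero_left (x : AM n sL sR) : Br 0 x = 0 := by
  rw [br_symm hBr, br_zero hBr]

lemma br_sq (x y : AM n sL sR) : Br x (y * y) = 0 := by
  rw [br_mul hBr, mul_comm (Br x y) y, add_self_zero]

lemma br_sq_left (x y : AM n sL sR) : Br (y * y) x = 0 := by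
  rw [br_symm hBr, br_sq hBr]

lemma br_C (x : AM n sL sR) (a : ZMod 2) : Br x (C a) = 0 := by
  have haa : (C a : AM n sL sR) = C a * C a := by
    rw [← C_mul]
    congr 1
    revert a; decide
  rw [haa, br_sq hBr]

lemma br_C_left (x : AM n sL sR) (a : ZMod 2) : Br (C a) x = 0 := by
  rw [br_symm hBr, br_C hBr]

lemma br_smul (x : AM n sL sR) (c : ZMod 2) (y : AM n sL sR) :
    Br x (c • y) = c • Br x y := by
  rw [smul_eq_C_mul, br_mul hBr, br_C hBr, zero_mul, zero_add, ← smul_eq_C_mul]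

lemma br_smul_left (c : ZMod 2) (x y : AM n sL sR) :
    Br (c • x) y = c • Br x y := by
  rw [br_symm hBr, br_smul hBr, br_symm hBr]

lemma br_sum {ι : Type*} (x : AM n sL sR) (s : Finset ι) (f : ι → AM n sL sR) :
    Br x (∑ i ∈ s, f i) = ∑ i ∈ s, Br x (f i) :=
  map_sum (AddMonoidHom.mk' (Br x) (hBr.2.1 x)) f s

lemma br_sum_left {ι : Type*} (x : AM n sL sR) (s : Finset ι) (f : ι → AM n sL sR) :
    Br (∑ i ∈ s, f i) x = ∑ i ∈ s, Br (f i) x := by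
  rw [br_symm hBr, br_sum hBr]
  exact Finset.sum_congr rfl fun i _ => br_symm hBr x (f i)

end BrBasics

end SFTProof
namespace SFTProof
set_option linter.unusedSectionVars false

section GenTables

variable {n : ℕ} [NeZero n] {sL sR : Equiv.Perm (Fin n)}

lemma genAL_eq {i j : Fin n} (h : i < j) :
    genAL sL sR i j = X (⟨MGenRaw.aL i j, h⟩ : MGen n sL sR) := dif_pos h

lemma genAR_eq {i j : Fin n} (h : i < j) :
    genAR sL sR i j = X (⟨MGenRaw.aR i j, h⟩ : MGen n sL sR) := dif_pos h

lemma genBL_eq {i j : Fin n} (h : i < j ∧ sL i = j) :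
    genBL sL sR i j = X (⟨MGenRaw.bL i j, h⟩ : MGen n sL sR) := dif_pos h

lemma genBR_eq {i j : Fin n} (h : i < j ∧ sR i = j) :
    genBR sL sR i j = X (⟨MGenRaw.bR i j, h⟩ : MGen n sL sR) := dif_pos h

lemma minmax_spec {s : Equiv.Perm (Fin n)} (hne : ∀ i, s i ≠ i) (hinv : ∀ i, s (s i) = i)
    (u : Fin n) :
    min u (s u) < max u (s u) ∧ s (min u (s u)) = max u (s u) := by
  rcases lt_or_gt_of_ne (hne u) with h | h
  · rw [min_eq_right h.le, max_eq_left h.le]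
    exact ⟨h, hinv u⟩
  · rw [min_eq_left h.le, max_eq_right h.le]
    exact ⟨h, rfl⟩

lemma xor_minmax (k l u w : Fin n) :
    Xor (k = min u w ∨ k = max u w) (l = min u w ∨ l = max u w)
      ↔ Xor (k = u ∨ k = w) (l = u ∨ l = w) := by
  rcases le_total u w with h | h
  · rw [min_eq_left h, max_eq_right h]
  · rw [min_eq_right h, max_eq_left h,
      show (k = w ∨ k = u) ↔ (k = u ∨ k = w) from or_comm,
      show (l = w ∨ l = u) ↔ (l = u ∨ l = w) from or_comm]

lemma xor_count {k l u w : Fin n} (hkl : k ≠ l) (huw : u ≠ w) :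
    (if Xor (k = u ∨ k = w) (l = u ∨ l = w) then (1 : ZMod 2) else 0)
      = ((if k = u then (1 : ZMod 2) else 0) + (if k = w then 1 else 0))
        + ((if l = u then 1 else 0) + (if l = w then 1 else 0)) := by
  by_cases h1 : k = u <;> by_cases h2 : k = w <;> by_cases h3 : l = u <;> by_cases h4 : l = w <;>
    simp_all [Xor] <;> decide

end GenTables

section BrTables

variable {n : ℕ} [NeZero n] {sL sR : Equiv.Perm (Fin n)}
variable {Br : AM n sL sR → AM n sL sR → AM n sL sR} (hBr : IsSFTBracket sL sR Br)
include hBr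

lemma br_AL_AL {i j k l : Fin n} (hij : i < j) (hkl : k < l) :
    Br (X (⟨MGenRaw.aL i j, hij⟩ : MGen n sL sR)) (X (⟨MGenRaw.aL k l, hkl⟩ : MGen n sL sR))
      = if j = k then genAL sL sR i l else if i = l then genAL sL sR k j else 0 := by
  rw [br_gen hBr]; rfl

lemma br_AR_AR {i j k l : Fin n} (hij : i < j) (hkl : k < l) :
    Br (X (⟨MGenRaw.aR i j, hij⟩ : MGen n sL sR)) (X (⟨MGenRaw.aR k l, hkl⟩ : MGen n sL sR))
      = if j = k then genAR sL sR i l else if i = l then genAR sL sR k j else 0 := by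
  rw [br_gen hBr]; rfl

lemma br_AL_AR {i j k l : Fin n} (hij : i < j) (hkl : k < l) :
    Br (X (⟨MGenRaw.aL i j, hij⟩ : MGen n sL sR)) (X (⟨MGenRaw.aR k l, hkl⟩ : MGen n sL sR))
      = 0 := by
  rw [br_gen hBr]; rfl

lemma br_AL_BL {i j k l : Fin n} (hij : i < j) (hb : k < l ∧ sL k = l) :
    Br (X (⟨MGenRaw.aL i j, hij⟩ : MGen n sL sR)) (X (⟨MGenRaw.bL k l, hb⟩ : MGen n sL sR))
      = if Xor (i = k ∨ i = l) (j = k ∨ j = l) then genAL sL sR i j else 0 := by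
  rw [br_gen hBr]; rfl

lemma br_BL_AL {i j k l : Fin n} (hij : i < j) (hb : k < l ∧ sL k = l) :
    Br (X (⟨MGenRaw.bL k l, hb⟩ : MGen n sL sR)) (X (⟨MGenRaw.aL i j, hij⟩ : MGen n sL sR))
      = if Xor (i = k ∨ i = l) (j = k ∨ j = l) then genAL sL sR i j else 0 := by
  rw [br_gen hBr]; rfl

lemma br_AR_BR {i j k l : Fin n} (hij : i < j) (hb : k < l ∧ sR k = l) :
    Br (X (⟨MGenRaw.aR i j, hij⟩ : MGen n sL sR)) (X (⟨MGenRaw.bR k l, hb⟩ : MGen n sL sR))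
      = if Xor (i = k ∨ i = l) (j = k ∨ j = l) then genAR sL sR i j else 0 := by
  rw [br_gen hBr]; rfl

lemma br_BR_AR {i j k l : Fin n} (hij : i < j) (hb : k < l ∧ sR k = l) :
    Br (X (⟨MGenRaw.bR k l, hb⟩ : MGen n sL sR)) (X (⟨MGenRaw.aR i j, hij⟩ : MGen n sL sR))
      = if Xor (i = k ∨ i = l) (j = k ∨ j = l) then genAR sL sR i j else 0 := by
  rw [br_gen hBr]; rfl

lemma br_AL_BR {i j k l : Fin n} (hij : i < j) (hb : k < l ∧ sR k = l) :
    Br (X (⟨MGenRaw.aL i j, hij⟩ : MGen n sL sR)) (X (⟨MGenRaw.bR k l, hb⟩ : MGen n sL sR))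
      = 0 := by
  rw [br_gen hBr]; rfl

lemma br_AR_BL {i j k l : Fin n} (hij : i < j) (hb : k < l ∧ sL k = l) :
    Br (X (⟨MGenRaw.aR i j, hij⟩ : MGen n sL sR)) (X (⟨MGenRaw.bL k l, hb⟩ : MGen n sL sR))
      = 0 := by
  rw [br_gen hBr]; rfl

end BrTables

end SFTProof
namespace SFTProof
set_option linter.unusedSectionVars false

/-- Index of the even (R) edge incident to position `s`. -/
def rE (s : ℕ) : ℕ := s - s % 2

/-- Index of the odd (L) edge incident to position `s` (or `n` if `s = 0`). -/
def lE (n s : ℕ) : ℕ := if s % 2 = 1 then s else if s = 0 then n else s - 1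

lemma even_ind (t s : ℕ) :
    (if t % 2 = 0 then ((if t = s then (1 : ZMod 2) else 0) + (if t + 1 = s then 1 else 0))
      else 0) = if t = rE s then 1 else 0 := by
  unfold rE
  split_ifs <;> first | decide | (exfalso; omega)

lemma odd_ind (n t s : ℕ) (ht : t < n) :
    (if t % 2 = 0 then 0
      else ((if t = s then (1 : ZMod 2) else 0) + (if t + 1 = s then 1 else 0)))
      = if t = lE n s then 1 else 0 := by
  unfold lE
  split_ifs <;> first | decide | (exfalso; omega)

lemma sum_even_ind (T s : ℕ) :
    (∑ t ∈ Finset.range T,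
      if t % 2 = 0 then ((if t = s then (1 : ZMod 2) else 0) + (if t + 1 = s then 1 else 0))
        else 0) = if rE s < T then 1 else 0 := by
  rw [Finset.sum_congr rfl fun t _ => even_ind t s, Finset.sum_ite_eq' (Finset.range T)]
  simp [Finset.mem_range]

lemma sum_odd_ind (n T s : ℕ) (hT : T ≤ n) :
    (∑ t ∈ Finset.range T,
      if t % 2 = 0 then 0
        else ((if t = s then (1 : ZMod 2) else 0) + (if t + 1 = s then 1 else 0)))
      = if lE n s < T then 1 else 0 := by
  rw [Finset.sum_congr rfl fun t ht =>
    odd_ind n t s (lt_of_lt_of_le (Finset.mem_range.1 ht) hT),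
    Finset.sum_ite_eq' (Finset.range T)]
  simp [Finset.mem_range]

lemma qR_parity (s t : ℕ) :
    ((if rE t < s then (1 : ZMod 2) else 0) + (if rE s < t then 1 else 0))
      = if s = t then 0 else 1 := by
  unfold rE
  split_ifs <;> first | decide | (exfalso; omega)

lemma qL_parity (n s t : ℕ) (hs : s < n) (ht : t < n) :
    ((if lE n t < s then (1 : ZMod 2) else 0) + (if lE n s < t then 1 else 0))
      = if s = t ∨ s = 0 ∨ t = 0 then 0 else 1 := by
  unfold lE
  split_ifs <;> first | decide | (exfalso; omega)

lemma qMix_parity (n s t : ℕ) (ht : t < n) :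
    ((if rE t < s then (1 : ZMod 2) else 0) + (if lE n s < t then 1 else 0))
      = if s = 0 then 0 else 1 := by
  unfold rE lE
  split_ifs <;> first | decide | (exfalso; omega)

end SFTProof
namespace SFTProof
set_option linter.unusedSectionVars false

section GammaBr

variable {n : ℕ} [NeZero n] {sL sR : Equiv.Perm (Fin n)}
variable (hsLne : ∀ i, sL i ≠ i) (hsLinv : ∀ i, sL (sL i) = i)
variable (hsRne : ∀ i, sR i ≠ i) (hsRinv : ∀ i, sR (sR i) = i)
variable (hvisit : ∀ i : Fin n, ∃ m, pathSeq sL sR m = i)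
variable {Br : AM n sL sR → AM n sL sR → AM n sL sR} (hBr : IsSFTBracket sL sR Br)

lemma ite_add_split (P : Prop) [Decidable P] (a b : ZMod 2) :
    (if P then a + b else 0) = (if P then a else 0) + (if P then b else 0) := by
  split_ifs <;> simp

lemma ite_else_add_split (P : Prop) [Decidable P] (a b : ZMod 2) :
    (if P then 0 else a + b) = (if P then 0 else a) + (if P then 0 else b) := by
  split_ifs <;> simp

lemma gammaEl_eq (a : Fin n) :
    gammaEl sL sR hvisit a = ∑ t ∈ Finset.range (T hvisit a), stepGen sL sR t := rfl

include hsLne hsLinv hsRne hsRinv in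
lemma ind_eq {t : ℕ} (ht : t < n) (b : Fin n) :
    (if b = pathSeq sL sR t then (1 : ZMod 2) else 0) = if t = T hvisit b then 1 else 0 := by
  by_cases h : t = T hvisit b
  · have hb : b = pathSeq sL sR t := by rw [h, pathSeq_T]
    rw [if_pos hb, if_pos h]
  · have hb : ¬ b = pathSeq sL sR t := fun hb =>
      h ((T_eq_iff hsLne hsLinv hsRne hsRinv hvisit ht b).1 hb.symm)
    rw [if_neg hb, if_neg h]

lemma ite_X_smul (P : Prop) [Decidable P] (x : AM n sL sR) :
    (if P then x else 0) = (if P then (1 : ZMod 2) else 0) • x := by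
  split_ifs <;> simp

include hsLne hsLinv hsRne hsRinv hBr in
lemma br_step_aR (t : ℕ) (htn : t + 1 < n) {k l : Fin n} (hkl : k < l) :
    Br (stepGen sL sR t) (X (⟨MGenRaw.aR k l, hkl⟩ : MGen n sL sR)) =
      (if t % 2 = 0 then
        (((if t = T hvisit k then (1 : ZMod 2) else 0)
            + (if t + 1 = T hvisit k then 1 else 0))
          + ((if t = T hvisit l then 1 else 0) + (if t + 1 = T hvisit l then 1 else 0)))
       else 0) • X (⟨MGenRaw.aR k l, hkl⟩ : MGen n sL sR) := by
  by_cases hpar : t % 2 = 0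
  · have hw : pathSeq sL sR (t+1) = sR (pathSeq sL sR t) := by rw [pathSeq_succ, if_pos hpar]
    obtain ⟨hlt, hs⟩ := minmax_spec hsRne hsRinv (pathSeq sL sR t)
    rw [stepGen, if_pos hpar, hw, genBR_eq ⟨hlt, hs⟩, br_gen hBr]
    have hred : mBrVal sL sR
        (⟨MGenRaw.bR (min (pathSeq sL sR t) (sR (pathSeq sL sR t)))
          (max (pathSeq sL sR t) (sR (pathSeq sL sR t))), ⟨hlt, hs⟩⟩ : MGen n sL sR)
        (⟨MGenRaw.aR k l, hkl⟩ : MGen n sL sR)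
        = if Xor (k = min (pathSeq sL sR t) (sR (pathSeq sL sR t))
              ∨ k = max (pathSeq sL sR t) (sR (pathSeq sL sR t)))
            (l = min (pathSeq sL sR t) (sR (pathSeq sL sR t))
              ∨ l = max (pathSeq sL sR t) (sR (pathSeq sL sR t)))
          then genAR sL sR k l else 0 := rfl
    rw [hred, genAR_eq hkl, ite_X_smul]
    simp only [xor_minmax]
    rw [xor_count hkl.ne (Ne.symm (hsRne (pathSeq sL sR t))),
      ind_eq hsLne hsLinv hsRne hsRinv hvisit (by omega) k,
      ind_eq hsLne hsLinv hsRne hsRinv hvisit (by omega) l, ← hw,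
      ind_eq hsLne hsLinv hsRne hsRinv hvisit htn k,
      ind_eq hsLne hsLinv hsRne hsRinv hvisit htn l, if_pos hpar]
  · have hw : pathSeq sL sR (t+1) = sL (pathSeq sL sR t) := by rw [pathSeq_succ, if_neg hpar]
    obtain ⟨hlt, hs⟩ := minmax_spec hsLne hsLinv (pathSeq sL sR t)
    rw [stepGen, if_neg hpar, hw, genBL_eq ⟨hlt, hs⟩, br_gen hBr, if_neg hpar, zero_smul]
    rfl

include hsLne hsLinv hsRne hsRinv hBr in
lemma br_step_aL (t : ℕ) (htn : t + 1 < n) {k l : Fin n} (hkl : k < l) :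
    Br (stepGen sL sR t) (X (⟨MGenRaw.aL k l, hkl⟩ : MGen n sL sR)) =
      (if t % 2 = 0 then 0 else
        (((if t = T hvisit k then (1 : ZMod 2) else 0)
            + (if t + 1 = T hvisit k then 1 else 0))
          + ((if t = T hvisit l then 1 else 0) + (if t + 1 = T hvisit l then 1 else 0))))
        • X (⟨MGenRaw.aL k l, hkl⟩ : MGen n sL sR) := by
  by_cases hpar : t % 2 = 0
  · have hw : pathSeq sL sR (t+1) = sR (pathSeq sL sR t) := by rw [pathSeq_succ, if_pos hpar]
    obtain ⟨hlt, hs⟩ := minmax_spec hsRne hsRinv (pathSeq sL sR t)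
    rw [stepGen, if_pos hpar, hw, genBR_eq ⟨hlt, hs⟩, br_gen hBr, if_pos hpar, zero_smul]
    rfl
  · have hw : pathSeq sL sR (t+1) = sL (pathSeq sL sR t) := by rw [pathSeq_succ, if_neg hpar]
    obtain ⟨hlt, hs⟩ := minmax_spec hsLne hsLinv (pathSeq sL sR t)
    rw [stepGen, if_neg hpar, hw, genBL_eq ⟨hlt, hs⟩, br_gen hBr]
    have hred : mBrVal sL sR
        (⟨MGenRaw.bL (min (pathSeq sL sR t) (sL (pathSeq sL sR t)))
          (max (pathSeq sL sR t) (sL (pathSeq sL sR t))), ⟨hlt, hs⟩⟩ : MGen n sL sR)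
        (⟨MGenRaw.aL k l, hkl⟩ : MGen n sL sR)
        = if Xor (k = min (pathSeq sL sR t) (sL (pathSeq sL sR t))
              ∨ k = max (pathSeq sL sR t) (sL (pathSeq sL sR t)))
            (l = min (pathSeq sL sR t) (sL (pathSeq sL sR t))
              ∨ l = max (pathSeq sL sR t) (sL (pathSeq sL sR t)))
          then genAL sL sR k l else 0 := rfl
    rw [hred, genAL_eq hkl, ite_X_smul]
    simp only [xor_minmax]
    rw [xor_count hkl.ne (Ne.symm (hsLne (pathSeq sL sR t))),
      ind_eq hsLne hsLinv hsRne hsRinv hvisit (by omega) k,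
      ind_eq hsLne hsLinv hsRne hsRinv hvisit (by omega) l, ← hw,
      ind_eq hsLne hsLinv hsRne hsRinv hvisit htn k,
      ind_eq hsLne hsLinv hsRne hsRinv hvisit htn l, if_neg hpar]

include hsLne hsLinv hsRne hsRinv hBr in
lemma br_step_b (t : ℕ) (g : MGen n sL sR)
    (hg : (∃ k l h, g = ⟨MGenRaw.bL k l, h⟩) ∨ (∃ k l h, g = ⟨MGenRaw.bR k l, h⟩)) :
    Br (stepGen sL sR t) (X g) = 0 := by
  by_cases hpar : t % 2 = 0
  · have hw : pathSeq sL sR (t+1) = sR (pathSeq sL sR t) := by rw [pathSeq_succ, if_pos hpar]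
    obtain ⟨hlt, hs⟩ := minmax_spec hsRne hsRinv (pathSeq sL sR t)
    rw [stepGen, if_pos hpar, hw, genBR_eq ⟨hlt, hs⟩, br_gen hBr]
    rcases hg with ⟨k, l, h, rfl⟩ | ⟨k, l, h, rfl⟩ <;> rfl
  · have hw : pathSeq sL sR (t+1) = sL (pathSeq sL sR t) := by rw [pathSeq_succ, if_neg hpar]
    obtain ⟨hlt, hs⟩ := minmax_spec hsLne hsLinv (pathSeq sL sR t)
    rw [stepGen, if_neg hpar, hw, genBL_eq ⟨hlt, hs⟩, br_gen hBr]
    rcases hg with ⟨k, l, h, rfl⟩ | ⟨k, l, h, rfl⟩ <;> rfl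

include hsLne hsLinv hsRne hsRinv hBr in
lemma br_gamma_aR (a : Fin n) {k l : Fin n} (hkl : k < l) :
    Br (gammaEl sL sR hvisit a) (X (⟨MGenRaw.aR k l, hkl⟩ : MGen n sL sR))
      = ((if rE (T hvisit k) < T hvisit a then (1 : ZMod 2) else 0)
          + (if rE (T hvisit l) < T hvisit a then 1 else 0))
        • X (⟨MGenRaw.aR k l, hkl⟩ : MGen n sL sR) := by
  have hTa : T hvisit a < n := T_lt hsLne hsLinv hsRne hsRinv hvisit a
  rw [gammaEl_eq, br_sum_left hBr,
    Finset.sum_congr rfl (fun t ht =>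
      br_step_aR hsLne hsLinv hsRne hsRinv hvisit hBr t
        (by have := Finset.mem_range.1 ht; omega) hkl),
    ← Finset.sum_smul]
  congr 1
  rw [Finset.sum_congr rfl (fun t _ => ite_add_split (t % 2 = 0) _ _),
    Finset.sum_add_distrib, sum_even_ind, sum_even_ind]

include hsLne hsLinv hsRne hsRinv hBr in
lemma br_gamma_aL (a : Fin n) {k l : Fin n} (hkl : k < l) :
    Br (gammaEl sL sR hvisit a) (X (⟨MGenRaw.aL k l, hkl⟩ : MGen n sL sR))
      = ((if lE n (T hvisit k) < T hvisit a then (1 : ZMod 2) else 0)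
          + (if lE n (T hvisit l) < T hvisit a then 1 else 0))
        • X (⟨MGenRaw.aL k l, hkl⟩ : MGen n sL sR) := by
  have hTa : T hvisit a < n := T_lt hsLne hsLinv hsRne hsRinv hvisit a
  rw [gammaEl_eq, br_sum_left hBr,
    Finset.sum_congr rfl (fun t ht =>
      br_step_aL hsLne hsLinv hsRne hsRinv hvisit hBr t
        (by have := Finset.mem_range.1 ht; omega) hkl),
    ← Finset.sum_smul]
  congr 1
  rw [Finset.sum_congr rfl (fun t _ => ite_else_add_split (t % 2 = 0) _ _),
    Finset.sum_add_distrib, sum_odd_ind n _ _ hTa.le, sum_odd_ind n _ _ hTa.le]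

include hsLne hsLinv hsRne hsRinv hBr in
lemma br_gamma_b (a : Fin n) (g : MGen n sL sR)
    (hg : (∃ k l h, g = ⟨MGenRaw.bL k l, h⟩) ∨ (∃ k l h, g = ⟨MGenRaw.bR k l, h⟩)) :
    Br (gammaEl sL sR hvisit a) (X g) = 0 := by
  rw [gammaEl_eq, br_sum_left hBr,
    Finset.sum_congr rfl (fun t _ => br_step_b hsLne hsLinv hsRne hsRinv hBr t g hg),
    Finset.sum_const_zero]

end GammaBr

end SFTProof
namespace SFTProof
set_option linter.unusedSectionVars false

section Reductions

variable {n : ℕ} [NeZero n] {sL sR : Equiv.Perm (Fin n)}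
variable (hvisit : ∀ i : Fin n, ∃ m, pathSeq sL sR m = i)

lemma genAL_self (i : Fin n) : genAL sL sR i i = 0 := dif_neg (lt_irrefl i)

lemma genAR_self (i : Fin n) : genAR sL sR i i = 0 := dif_neg (lt_irrefl i)

lemma delta_aL {i j : Fin n} (hij : i < j) :
    deltaStrVal sL sR hvisit ⟨MGenRaw.aL i j, hij⟩
      = (gammaEl sL sR hvisit i + gammaEl sL sR hvisit j) * genAL sL sR i j
        + ∑ k : Fin n, if i < k ∧ k < j then genAL sL sR i k * genAL sL sR k j else 0 := rfl

lemma delta_aR {i j : Fin n} (hij : i < j) :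
    deltaStrVal sL sR hvisit ⟨MGenRaw.aR i j, hij⟩
      = (gammaEl sL sR hvisit i + gammaEl sL sR hvisit j) * genAR sL sR i j
        + ∑ k : Fin n, if i < k ∧ k < j then genAR sL sR i k * genAR sL sR k j else 0 := rfl

lemma delta_bL {i j : Fin n} (h : i < j ∧ sL i = j) :
    deltaStrVal sL sR hvisit ⟨MGenRaw.bL i j, h⟩ = genBL sL sR i j ^ 2 := rfl

lemma delta_bR {i j : Fin n} (h : i < j ∧ sR i = j) :
    deltaStrVal sL sR hvisit ⟨MGenRaw.bR i j, h⟩ = genBR sL sR i j ^ 2 := rfl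

lemma mBr_aL_aL {i j k l : Fin n} (hij : i < j) (hkl : k < l) :
    mBrVal sL sR (⟨MGenRaw.aL i j, hij⟩ : MGen n sL sR) ⟨MGenRaw.aL k l, hkl⟩
      = if j = k then genAL sL sR i l else if i = l then genAL sL sR k j else 0 := rfl

lemma mBr_aR_aR {i j k l : Fin n} (hij : i < j) (hkl : k < l) :
    mBrVal sL sR (⟨MGenRaw.aR i j, hij⟩ : MGen n sL sR) ⟨MGenRaw.aR k l, hkl⟩
      = if j = k then genAR sL sR i l else if i = l then genAR sL sR k j else 0 := rfl

lemma mBrVal_symm (g g' : MGen n sL sR) : mBrVal sL sR g g' = mBrVal sL sR g' g := by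
  obtain ⟨gr, hg⟩ := g
  obtain ⟨g'r, hg'⟩ := g'
  cases gr <;> cases g'r <;> try rfl
  case aL.aL i j k l =>
    show (if j = k then genAL sL sR i l else if i = l then genAL sL sR k j else 0)
      = (if l = i then genAL sL sR k j else if k = j then genAL sL sR i l else 0)
    by_cases h1 : j = k <;> by_cases h2 : i = l
    · subst h1; subst h2
      rw [if_pos rfl, if_pos rfl]
      have h3 : i < i := lt_trans hg hg'
      exact absurd h3 (lt_irrefl i)
    · subst h1
      rw [if_pos rfl, if_neg (fun h => h2 h.symm), if_pos rfl]
    · subst h2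
      rw [if_neg h1, if_pos rfl, if_pos rfl]
    · rw [if_neg h1, if_neg h2, if_neg (fun h => h2 h.symm), if_neg (fun h => h1 h.symm)]
  case aR.aR i j k l =>
    show (if j = k then genAR sL sR i l else if i = l then genAR sL sR k j else 0)
      = (if l = i then genAR sL sR k j else if k = j then genAR sL sR i l else 0)
    by_cases h1 : j = k <;> by_cases h2 : i = l
    · subst h1; subst h2
      have h3 : i < i := lt_trans hg hg'
      exact absurd h3 (lt_irrefl i)
    · subst h1
      rw [if_pos rfl, if_neg (fun h => h2 h.symm), if_pos rfl]
    · subst h2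
      rw [if_neg h1, if_pos rfl, if_pos rfl]
    · rw [if_neg h1, if_neg h2, if_neg (fun h => h2 h.symm), if_neg (fun h => h1 h.symm)]

end Reductions

section BrIte

variable {n : ℕ} [NeZero n] {sL sR : Equiv.Perm (Fin n)}
variable {Br : AM n sL sR → AM n sL sR → AM n sL sR} (hBr : IsSFTBracket sL sR Br)
include hBr

lemma br_ite (x : AM n sL sR) (P : Prop) [Decidable P] (y : AM n sL sR) :
    Br x (if P then y else 0) = if P then Br x y else 0 := by
  split_ifs
  · rfl
  · exact br_zero hBr x

lemma br_ite_left (x : AM n sL sR) (P : Prop) [Decidable P] (y : AM n sL sR) :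
    Br (if P then y else 0) x = if P then Br y x else 0 := by
  split_ifs
  · rfl
  · exact br_zero_left hBr x

end BrIte

section Char2Helpers

lemma char2_regroup3 (A B Cc D E F G : ZMod 2) :
    ((A + B) + (Cc + D)) + ((E + Cc) + (F + G)) = ((A + E) + (B + F)) + (D + G) := by
  revert A B Cc D E F G; decide

lemma char2_regroup4 (A B C D E F G H : ZMod 2) :
    ((A + B) + (C + D)) + ((E + F) + (G + H))
      = ((A + E) + (B + G)) + ((C + F) + (D + H)) := by
  revert A B C D E F G H; decide

end Char2Helpers

end SFTProof
namespace SFTProof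
set_option linter.unusedSectionVars false

section SumBr

variable {n : ℕ} [NeZero n] {sL sR : Equiv.Perm (Fin n)}
variable {Br : AM n sL sR → AM n sL sR → AM n sL sR} (hBr : IsSFTBracket sL sR Br)

lemma ite_add_split_AM (P : Prop) [Decidable P] (a b : AM n sL sR) :
    (if P then a + b else 0) = (if P then a else 0) + (if P then b else 0) := by
  split_ifs <;> simp

lemma ite_swap {M : Type*} [Zero M] (P Q : Prop) [Decidable P] [Decidable Q] (x : M) :
    (if P then (if Q then x else 0) else 0) = if Q then (if P then x else 0) else 0 := by
  split_ifs <;> rfl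

include hBr in
lemma xor_chain (A B C : Prop) [Decidable A] [Decidable B] [Decidable C] (u w : AM n sL sR) :
    (if Xor A B then u else 0) * w + u * (if Xor B C then w else 0)
      = if Xor A C then u * w else 0 := by
  by_cases hA : A <;> by_cases hB : B <;> by_cases hC : C <;>
    simp [Xor, hA, hB, hC, add_self_zero]

/-- collapse `∑ m, if g m then (if m = k then f m else 0) else 0`. -/
lemma sum_guard_eq (g : Fin n → Prop) [DecidablePred g] (k : Fin n) (f : Fin n → AM n sL sR) :
    (∑ m : Fin n, if g m then (if m = k then f m else 0) else 0)
      = if g k then f k else 0 := by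
  rw [Finset.sum_congr rfl (fun m _ => ite_swap (g m) (m = k) (f m)),
    Finset.sum_ite_eq' Finset.univ k (fun m => if g m then f m else 0)]
  simp

include hBr in
lemma br_sumL_bL {i j k l : Fin n} (hij : i < j) (hb : k < l ∧ sL k = l) :
    Br (∑ m : Fin n, if i < m ∧ m < j then genAL sL sR i m * genAL sL sR m j else 0)
        (X (⟨MGenRaw.bL k l, hb⟩ : MGen n sL sR))
      = if Xor (i = k ∨ i = l) (j = k ∨ j = l)
          then (∑ m : Fin n, if i < m ∧ m < j then genAL sL sR i m * genAL sL sR m j else 0)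
          else 0 := by
  rw [br_sum_left hBr]
  have hcong : ∀ m : Fin n, (Br (if i < m ∧ m < j then genAL sL sR i m * genAL sL sR m j else 0)
      (X (⟨MGenRaw.bL k l, hb⟩ : MGen n sL sR)))
      = if i < m ∧ m < j then
          (if Xor (i = k ∨ i = l) (j = k ∨ j = l) then genAL sL sR i m * genAL sL sR m j else 0)
        else 0 := by
    intro m
    rw [br_ite_left hBr]
    by_cases hc : i < m ∧ m < j
    · rw [if_pos hc, if_pos hc, br_mul_left hBr, genAL_eq hc.1, genAL_eq hc.2,
        br_AL_BL hBr hc.1 hb, br_AL_BL hBr hc.2 hb, ← genAL_eq hc.1, ← genAL_eq hc.2,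
        xor_chain hBr]
    · rw [if_neg hc, if_neg hc]
  rw [Finset.sum_congr rfl fun m _ => hcong m]
  by_cases hx : Xor (i = k ∨ i = l) (j = k ∨ j = l) <;> simp [hx]

include hBr in
lemma br_sumR_bR {i j k l : Fin n} (hij : i < j) (hb : k < l ∧ sR k = l) :
    Br (∑ m : Fin n, if i < m ∧ m < j then genAR sL sR i m * genAR sL sR m j else 0)
        (X (⟨MGenRaw.bR k l, hb⟩ : MGen n sL sR))
      = if Xor (i = k ∨ i = l) (j = k ∨ j = l)
          then (∑ m : Fin n, if i < m ∧ m < j then genAR sL sR i m * genAR sL sR m j else 0)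
          else 0 := by
  rw [br_sum_left hBr]
  have hcong : ∀ m : Fin n, (Br (if i < m ∧ m < j then genAR sL sR i m * genAR sL sR m j else 0)
      (X (⟨MGenRaw.bR k l, hb⟩ : MGen n sL sR)))
      = if i < m ∧ m < j then
          (if Xor (i = k ∨ i = l) (j = k ∨ j = l) then genAR sL sR i m * genAR sL sR m j else 0)
        else 0 := by
    intro m
    rw [br_ite_left hBr]
    by_cases hc : i < m ∧ m < j
    · rw [if_pos hc, if_pos hc, br_mul_left hBr, genAR_eq hc.1, genAR_eq hc.2,
        br_AR_BR hBr hc.1 hb, br_AR_BR hBr hc.2 hb, ← genAR_eq hc.1, ← genAR_eq hc.2,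
        xor_chain hBr]
    · rw [if_neg hc, if_neg hc]
  rw [Finset.sum_congr rfl fun m _ => hcong m]
  by_cases hx : Xor (i = k ∨ i = l) (j = k ∨ j = l) <;> simp [hx]

include hBr in
lemma br_sumL_bR {i j k l : Fin n} (hij : i < j) (hb : k < l ∧ sR k = l) :
    Br (∑ m : Fin n, if i < m ∧ m < j then genAL sL sR i m * genAL sL sR m j else 0)
        (X (⟨MGenRaw.bR k l, hb⟩ : MGen n sL sR)) = 0 := by
  rw [br_sum_left hBr]
  rw [Finset.sum_congr rfl (fun m _ => ?_), Finset.sum_const_zero]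
  rw [br_ite_left hBr]
  by_cases hc : i < m ∧ m < j
  · rw [if_pos hc, br_mul_left hBr, genAL_eq hc.1, genAL_eq hc.2,
      br_AL_BR hBr hc.1 hb, br_AL_BR hBr hc.2 hb, zero_mul, mul_zero, add_zero]
  · rw [if_neg hc]

include hBr in
lemma br_sumR_bL {i j k l : Fin n} (hij : i < j) (hb : k < l ∧ sL k = l) :
    Br (∑ m : Fin n, if i < m ∧ m < j then genAR sL sR i m * genAR sL sR m j else 0)
        (X (⟨MGenRaw.bL k l, hb⟩ : MGen n sL sR)) = 0 := by
  rw [br_sum_left hBr]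
  rw [Finset.sum_congr rfl (fun m _ => ?_), Finset.sum_const_zero]
  rw [br_ite_left hBr]
  by_cases hc : i < m ∧ m < j
  · rw [if_pos hc, br_mul_left hBr, genAR_eq hc.1, genAR_eq hc.2,
      br_AR_BL hBr hc.1 hb, br_AR_BL hBr hc.2 hb, zero_mul, mul_zero, add_zero]
  · rw [if_neg hc]

include hBr in
lemma br_sumL_aR {i j k l : Fin n} (hij : i < j) (hkl : k < l) :
    Br (∑ m : Fin n, if i < m ∧ m < j then genAL sL sR i m * genAL sL sR m j else 0)
        (X (⟨MGenRaw.aR k l, hkl⟩ : MGen n sL sR)) = 0 := by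
  rw [br_sum_left hBr]
  rw [Finset.sum_congr rfl (fun m _ => ?_), Finset.sum_const_zero]
  rw [br_ite_left hBr]
  by_cases hc : i < m ∧ m < j
  · rw [if_pos hc, br_mul_left hBr, genAL_eq hc.1, genAL_eq hc.2,
      br_AL_AR hBr hc.1 hkl, br_AL_AR hBr hc.2 hkl, zero_mul, mul_zero, add_zero]
  · rw [if_neg hc]

include hBr in
lemma br_sumR_aL {i j k l : Fin n} (hij : i < j) (hkl : k < l) :
    Br (∑ m : Fin n, if i < m ∧ m < j then genAR sL sR i m * genAR sL sR m j else 0)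
        (X (⟨MGenRaw.aL k l, hkl⟩ : MGen n sL sR)) = 0 := by
  rw [br_sum_left hBr]
  rw [Finset.sum_congr rfl (fun m _ => ?_), Finset.sum_const_zero]
  rw [br_ite_left hBr]
  by_cases hc : i < m ∧ m < j
  · rw [if_pos hc, br_mul_left hBr, genAR_eq hc.1, genAR_eq hc.2,
      br_symm hBr, br_AL_AR hBr hkl hc.1, zero_mul, zero_add,
      br_symm hBr, br_AL_AR hBr hkl hc.2, mul_zero]
  · rw [if_neg hc]

end SumBr

end SFTProof
namespace SFTProof
set_option linter.unusedSectionVars false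

section SumBr2

variable {n : ℕ} [NeZero n] {sL sR : Equiv.Perm (Fin n)}
variable {Br : AM n sL sR → AM n sL sR → AM n sL sR} (hBr : IsSFTBracket sL sR Br)

lemma sum_guard_eq' (g : Fin n → Prop) [DecidablePred g] (k : Fin n) (f : Fin n → AM n sL sR) :
    (∑ m : Fin n, if g m then (if k = m then f m else 0) else 0)
      = if g k then f k else 0 := by
  rw [Finset.sum_congr rfl (fun m _ => ite_swap (g m) (k = m) (f m)),
    Finset.sum_ite_eq Finset.univ k (fun m => if g m then f m else 0)]
  simp

include hBr in
lemma br_sumL_adj {i j l : Fin n} (hij : i < j) (hjl : j < l) :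
    Br (∑ m : Fin n, if i < m ∧ m < j then genAL sL sR i m * genAL sL sR m j else 0)
        (X (⟨MGenRaw.aL j l, hjl⟩ : MGen n sL sR))
      = ∑ m : Fin n, if i < m ∧ m < j then genAL sL sR i m * genAL sL sR m l else 0 := by
  rw [br_sum_left hBr]
  refine Finset.sum_congr rfl fun m _ => ?_
  rw [br_ite_left hBr]
  by_cases hc : i < m ∧ m < j
  · rw [if_pos hc, if_pos hc, br_mul_left hBr, genAL_eq hc.1, genAL_eq hc.2,
      br_AL_AL hBr hc.1 hjl, br_AL_AL hBr hc.2 hjl, if_neg hc.2.ne,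
      if_neg (hij.trans hjl).ne, if_pos rfl, zero_mul, zero_add, ← genAL_eq hc.1]
  · rw [if_neg hc, if_neg hc]

include hBr in
lemma br_adj_sumL {i j l : Fin n} (hij : i < j) (hjl : j < l) :
    Br (X (⟨MGenRaw.aL i j, hij⟩ : MGen n sL sR))
        (∑ m : Fin n, if j < m ∧ m < l then genAL sL sR j m * genAL sL sR m l else 0)
      = ∑ m : Fin n, if j < m ∧ m < l then genAL sL sR i m * genAL sL sR m l else 0 := by
  rw [br_sum hBr]
  refine Finset.sum_congr rfl fun m _ => ?_
  rw [br_ite hBr]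
  by_cases hc : j < m ∧ m < l
  · rw [if_pos hc, if_pos hc, br_mul hBr, genAL_eq hc.1, genAL_eq hc.2,
      br_AL_AL hBr hij hc.1, br_AL_AL hBr hij hc.2, if_pos rfl, if_neg hc.1.ne,
      if_neg (hij.trans (hc.1.trans hc.2)).ne, mul_zero, add_zero, ← genAL_eq hc.2]
  · rw [if_neg hc, if_neg hc]

include hBr in
lemma br_sumL_gen {i j k l : Fin n} (hij : i < j) (hkl : k < l) (hjk : j ≠ k) (hil : i ≠ l) :
    Br (∑ m : Fin n, if i < m ∧ m < j then genAL sL sR i m * genAL sL sR m j else 0)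
        (X (⟨MGenRaw.aL k l, hkl⟩ : MGen n sL sR))
      = (if i < k ∧ k < j then genAL sL sR i l * genAL sL sR k j else 0)
        + (if i < l ∧ l < j then genAL sL sR i l * genAL sL sR k j else 0) := by
  rw [br_sum_left hBr]
  have hcong : ∀ m : Fin n,
      Br (if i < m ∧ m < j then genAL sL sR i m * genAL sL sR m j else 0)
        (X (⟨MGenRaw.aL k l, hkl⟩ : MGen n sL sR))
      = if i < m ∧ m < j then
          ((if m = k then genAL sL sR i l * genAL sL sR m j else 0)
            + (if m = l then genAL sL sR i m * genAL sL sR k j else 0)) else 0 := by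
    intro m
    rw [br_ite_left hBr]
    by_cases hc : i < m ∧ m < j
    · rw [if_pos hc, if_pos hc, br_mul_left hBr, genAL_eq hc.1, genAL_eq hc.2,
        br_AL_AL hBr hc.1 hkl, br_AL_AL hBr hc.2 hkl, if_neg hil, if_neg hjk,
        ite_mul, mul_ite, zero_mul, mul_zero, ← genAL_eq hc.1, ← genAL_eq hc.2]
    · rw [if_neg hc, if_neg hc]
  rw [Finset.sum_congr rfl fun m _ => hcong m,
    Finset.sum_congr rfl fun m _ => ite_add_split_AM (i < m ∧ m < j) _ _,
    Finset.sum_add_distrib,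
    sum_guard_eq (fun m => i < m ∧ m < j) k (fun m => genAL sL sR i l * genAL sL sR m j),
    sum_guard_eq (fun m => i < m ∧ m < j) l (fun m => genAL sL sR i m * genAL sL sR k j)]

include hBr in
lemma br_gen_sumL {i j k l : Fin n} (hij : i < j) (hkl : k < l) (hjk : j ≠ k) (hil : i ≠ l) :
    Br (X (⟨MGenRaw.aL i j, hij⟩ : MGen n sL sR))
        (∑ m : Fin n, if k < m ∧ m < l then genAL sL sR k m * genAL sL sR m l else 0)
      = (if k < i ∧ i < l then genAL sL sR k j * genAL sL sR i l else 0)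
        + (if k < j ∧ j < l then genAL sL sR k j * genAL sL sR i l else 0) := by
  rw [br_sum hBr]
  have hcong : ∀ m : Fin n,
      Br (X (⟨MGenRaw.aL i j, hij⟩ : MGen n sL sR))
        (if k < m ∧ m < l then genAL sL sR k m * genAL sL sR m l else 0)
      = if k < m ∧ m < l then
          ((if i = m then genAL sL sR k j * genAL sL sR m l else 0)
            + (if j = m then genAL sL sR k m * genAL sL sR i l else 0)) else 0 := by
    intro m
    rw [br_ite hBr]
    by_cases hc : k < m ∧ m < l
    · rw [if_pos hc, if_pos hc, br_mul hBr, genAL_eq hc.1, genAL_eq hc.2,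
        br_AL_AL hBr hij hc.1, br_AL_AL hBr hij hc.2, if_neg hjk, if_neg hil,
        ite_mul, mul_ite, zero_mul, mul_zero, ← genAL_eq hc.1, ← genAL_eq hc.2]
    · rw [if_neg hc, if_neg hc]
  rw [Finset.sum_congr rfl fun m _ => hcong m,
    Finset.sum_congr rfl fun m _ => ite_add_split_AM (k < m ∧ m < l) _ _,
    Finset.sum_add_distrib,
    sum_guard_eq' (fun m => k < m ∧ m < l) i (fun m => genAL sL sR k j * genAL sL sR m l),
    sum_guard_eq' (fun m => k < m ∧ m < l) j (fun m => genAL sL sR k m * genAL sL sR i l)]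

include hBr in
lemma br_sumR_adj {i j l : Fin n} (hij : i < j) (hjl : j < l) :
    Br (∑ m : Fin n, if i < m ∧ m < j then genAR sL sR i m * genAR sL sR m j else 0)
        (X (⟨MGenRaw.aR j l, hjl⟩ : MGen n sL sR))
      = ∑ m : Fin n, if i < m ∧ m < j then genAR sL sR i m * genAR sL sR m l else 0 := by
  rw [br_sum_left hBr]
  refine Finset.sum_congr rfl fun m _ => ?_
  rw [br_ite_left hBr]
  by_cases hc : i < m ∧ m < j
  · rw [if_pos hc, if_pos hc, br_mul_left hBr, genAR_eq hc.1, genAR_eq hc.2,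
      br_AR_AR hBr hc.1 hjl, br_AR_AR hBr hc.2 hjl, if_neg hc.2.ne,
      if_neg (hij.trans hjl).ne, if_pos rfl, zero_mul, zero_add, ← genAR_eq hc.1]
  · rw [if_neg hc, if_neg hc]

include hBr in
lemma br_adj_sumR {i j l : Fin n} (hij : i < j) (hjl : j < l) :
    Br (X (⟨MGenRaw.aR i j, hij⟩ : MGen n sL sR))
        (∑ m : Fin n, if j < m ∧ m < l then genAR sL sR j m * genAR sL sR m l else 0)
      = ∑ m : Fin n, if j < m ∧ m < l then genAR sL sR i m * genAR sL sR m l else 0 := by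
  rw [br_sum hBr]
  refine Finset.sum_congr rfl fun m _ => ?_
  rw [br_ite hBr]
  by_cases hc : j < m ∧ m < l
  · rw [if_pos hc, if_pos hc, br_mul hBr, genAR_eq hc.1, genAR_eq hc.2,
      br_AR_AR hBr hij hc.1, br_AR_AR hBr hij hc.2, if_pos rfl, if_neg hc.1.ne,
      if_neg (hij.trans (hc.1.trans hc.2)).ne, mul_zero, add_zero, ← genAR_eq hc.2]
  · rw [if_neg hc, if_neg hc]

include hBr in
lemma br_sumR_gen {i j k l : Fin n} (hij : i < j) (hkl : k < l) (hjk : j ≠ k) (hil : i ≠ l) :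
    Br (∑ m : Fin n, if i < m ∧ m < j then genAR sL sR i m * genAR sL sR m j else 0)
        (X (⟨MGenRaw.aR k l, hkl⟩ : MGen n sL sR))
      = (if i < k ∧ k < j then genAR sL sR i l * genAR sL sR k j else 0)
        + (if i < l ∧ l < j then genAR sL sR i l * genAR sL sR k j else 0) := by
  rw [br_sum_left hBr]
  have hcong : ∀ m : Fin n,
      Br (if i < m ∧ m < j then genAR sL sR i m * genAR sL sR m j else 0)
        (X (⟨MGenRaw.aR k l, hkl⟩ : MGen n sL sR))
      = if i < m ∧ m < j then
          ((if m = k then genAR sL sR i l * genAR sL sR m j else 0)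
            + (if m = l then genAR sL sR i m * genAR sL sR k j else 0)) else 0 := by
    intro m
    rw [br_ite_left hBr]
    by_cases hc : i < m ∧ m < j
    · rw [if_pos hc, if_pos hc, br_mul_left hBr, genAR_eq hc.1, genAR_eq hc.2,
        br_AR_AR hBr hc.1 hkl, br_AR_AR hBr hc.2 hkl, if_neg hil, if_neg hjk,
        ite_mul, mul_ite, zero_mul, mul_zero, ← genAR_eq hc.1, ← genAR_eq hc.2]
    · rw [if_neg hc, if_neg hc]
  rw [Finset.sum_congr rfl fun m _ => hcong m,
    Finset.sum_congr rfl fun m _ => ite_add_split_AM (i < m ∧ m < j) _ _,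
    Finset.sum_add_distrib,
    sum_guard_eq (fun m => i < m ∧ m < j) k (fun m => genAR sL sR i l * genAR sL sR m j),
    sum_guard_eq (fun m => i < m ∧ m < j) l (fun m => genAR sL sR i m * genAR sL sR k j)]

include hBr in
lemma br_gen_sumR {i j k l : Fin n} (hij : i < j) (hkl : k < l) (hjk : j ≠ k) (hil : i ≠ l) :
    Br (X (⟨MGenRaw.aR i j, hij⟩ : MGen n sL sR))
        (∑ m : Fin n, if k < m ∧ m < l then genAR sL sR k m * genAR sL sR m l else 0)
      = (if k < i ∧ i < l then genAR sL sR k j * genAR sL sR i l else 0)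
        + (if k < j ∧ j < l then genAR sL sR k j * genAR sL sR i l else 0) := by
  rw [br_sum hBr]
  have hcong : ∀ m : Fin n,
      Br (X (⟨MGenRaw.aR i j, hij⟩ : MGen n sL sR))
        (if k < m ∧ m < l then genAR sL sR k m * genAR sL sR m l else 0)
      = if k < m ∧ m < l then
          ((if i = m then genAR sL sR k j * genAR sL sR m l else 0)
            + (if j = m then genAR sL sR k m * genAR sL sR i l else 0)) else 0 := by
    intro m
    rw [br_ite hBr]
    by_cases hc : k < m ∧ m < l
    · rw [if_pos hc, if_pos hc, br_mul hBr, genAR_eq hc.1, genAR_eq hc.2,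
        br_AR_AR hBr hij hc.1, br_AR_AR hBr hij hc.2, if_neg hjk, if_neg hil,
        ite_mul, mul_ite, zero_mul, mul_zero, ← genAR_eq hc.1, ← genAR_eq hc.2]
    · rw [if_neg hc, if_neg hc]
  rw [Finset.sum_congr rfl fun m _ => hcong m,
    Finset.sum_congr rfl fun m _ => ite_add_split_AM (k < m ∧ m < l) _ _,
    Finset.sum_add_distrib,
    sum_guard_eq' (fun m => k < m ∧ m < l) i (fun m => genAR sL sR k j * genAR sL sR m l),
    sum_guard_eq' (fun m => k < m ∧ m < l) j (fun m => genAR sL sR k m * genAR sL sR i l)]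

end SumBr2

end SFTProof
namespace SFTProof
set_option linter.unusedSectionVars false

section Core

variable {n : ℕ} [NeZero n] {sL sR : Equiv.Perm (Fin n)}

/-- The core generator-level identity. -/
def CoreEq (hvisit : ∀ i : Fin n, ∃ m, pathSeq sL sR m = i)
    (Dstr : Derivation (ZMod 2) (AM n sL sR) (AM n sL sR))
    (Br : AM n sL sR → AM n sL sR → AM n sL sR) (g g' : MGen n sL sR) : Prop :=
  Dstr (mBrVal sL sR g g')
    = Br (deltaStrVal sL sR hvisit g) (X g') + Br (X g) (deltaStrVal sL sR hvisit g')

variable (hsLne : ∀ i, sL i ≠ i) (hsLinv : ∀ i, sL (sL i) = i)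
variable (hsRne : ∀ i, sR i ≠ i) (hsRinv : ∀ i, sR (sR i) = i)
variable (hvisit : ∀ i : Fin n, ∃ m, pathSeq sL sR m = i)
variable (Dstr : Derivation (ZMod 2) (AM n sL sR) (AM n sL sR))
variable (hDstr : ∀ g : MGen n sL sR, Dstr (X g) = deltaStrVal sL sR hvisit g)
variable {Br : AM n sL sR → AM n sL sR → AM n sL sR} (hBr : IsSFTBracket sL sR Br)

include hBr in
lemma core_swap {g g' : MGen n sL sR} (h : CoreEq hvisit Dstr Br g g') :
    CoreEq hvisit Dstr Br g' g := by
  unfold CoreEq at h ⊢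
  rw [mBrVal_symm, h, br_symm hBr (deltaStrVal sL sR hvisit g) (X g'),
    br_symm hBr (X g) (deltaStrVal sL sR hvisit g'), add_comm]

include hBr in
lemma core_b_b (g g' : MGen n sL sR)
    (hg : (∃ k l h, g = ⟨MGenRaw.bL k l, h⟩) ∨ (∃ k l h, g = ⟨MGenRaw.bR k l, h⟩))
    (hg' : (∃ k l h, g' = ⟨MGenRaw.bL k l, h⟩) ∨ (∃ k l h, g' = ⟨MGenRaw.bR k l, h⟩)) :
    CoreEq hvisit Dstr Br g g' := by
  unfold CoreEq
  have hz : mBrVal sL sR g g' = 0 := by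
    rcases hg with ⟨k, l, h, rfl⟩ | ⟨k, l, h, rfl⟩ <;>
      rcases hg' with ⟨k', l', h', rfl⟩ | ⟨k', l', h', rfl⟩ <;> rfl
  have hd : Br (deltaStrVal sL sR hvisit g) (X g') = 0 := by
    rcases hg with ⟨k, l, h, rfl⟩ | ⟨k, l, h, rfl⟩
    · rw [delta_bL hvisit, pow_two, br_sq_left hBr]
    · rw [delta_bR hvisit, pow_two, br_sq_left hBr]
  have hd' : Br (X g) (deltaStrVal sL sR hvisit g') = 0 := by
    rcases hg' with ⟨k', l', h', rfl⟩ | ⟨k', l', h', rfl⟩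
    · rw [delta_bL hvisit, pow_two, br_sq hBr]
    · rw [delta_bR hvisit, pow_two, br_sq hBr]
  rw [hz, map_zero, hd, hd', add_zero]

include hsLne hsLinv hsRne hsRinv hDstr hBr in
lemma core_aL_bL {i j k l : Fin n} (hij : i < j) (hb : k < l ∧ sL k = l) :
    CoreEq hvisit Dstr Br ⟨MGenRaw.aL i j, hij⟩ ⟨MGenRaw.bL k l, hb⟩ := by
  unfold CoreEq
  have h2 : Br (X (⟨MGenRaw.aL i j, hij⟩ : MGen n sL sR))
      (deltaStrVal sL sR hvisit ⟨MGenRaw.bL k l, hb⟩) = 0 := by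
    rw [delta_bL hvisit, pow_two, br_sq hBr]
  have hg0 : Br (gammaEl sL sR hvisit i + gammaEl sL sR hvisit j)
      (X (⟨MGenRaw.bL k l, hb⟩ : MGen n sL sR)) = 0 := by
    rw [br_add_left hBr,
      br_gamma_b hsLne hsLinv hsRne hsRinv hvisit hBr i _ (Or.inl ⟨k, l, hb, rfl⟩),
      br_gamma_b hsLne hsLinv hsRne hsRinv hvisit hBr j _ (Or.inl ⟨k, l, hb, rfl⟩), add_zero]
  have hm : mBrVal sL sR (⟨MGenRaw.aL i j, hij⟩ : MGen n sL sR) ⟨MGenRaw.bL k l, hb⟩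
      = if Xor (i = k ∨ i = l) (j = k ∨ j = l) then genAL sL sR i j else 0 := rfl
  rw [h2, add_zero, delta_aL hvisit hij, genAL_eq hij, br_add_left hBr, br_mul_left hBr,
    hg0, zero_mul, zero_add, br_AL_BL hBr hij hb, br_sumL_bL hBr hij hb, hm]
  by_cases hx : Xor (i = k ∨ i = l) (j = k ∨ j = l)
  · rw [if_pos hx, genAL_eq hij, hDstr ⟨MGenRaw.aL i j, hij⟩, delta_aL hvisit hij,
      genAL_eq hij, if_pos hx]
  · rw [if_neg hx, if_neg hx, map_zero, mul_zero, add_zero]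

include hsLne hsLinv hsRne hsRinv hDstr hBr in
lemma core_aR_bR {i j k l : Fin n} (hij : i < j) (hb : k < l ∧ sR k = l) :
    CoreEq hvisit Dstr Br ⟨MGenRaw.aR i j, hij⟩ ⟨MGenRaw.bR k l, hb⟩ := by
  unfold CoreEq
  have h2 : Br (X (⟨MGenRaw.aR i j, hij⟩ : MGen n sL sR))
      (deltaStrVal sL sR hvisit ⟨MGenRaw.bR k l, hb⟩) = 0 := by
    rw [delta_bR hvisit, pow_two, br_sq hBr]
  have hg0 : Br (gammaEl sL sR hvisit i + gammaEl sL sR hvisit j)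
      (X (⟨MGenRaw.bR k l, hb⟩ : MGen n sL sR)) = 0 := by
    rw [br_add_left hBr,
      br_gamma_b hsLne hsLinv hsRne hsRinv hvisit hBr i _ (Or.inr ⟨k, l, hb, rfl⟩),
      br_gamma_b hsLne hsLinv hsRne hsRinv hvisit hBr j _ (Or.inr ⟨k, l, hb, rfl⟩), add_zero]
  have hm : mBrVal sL sR (⟨MGenRaw.aR i j, hij⟩ : MGen n sL sR) ⟨MGenRaw.bR k l, hb⟩
      = if Xor (i = k ∨ i = l) (j = k ∨ j = l) then genAR sL sR i j else 0 := rfl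
  rw [h2, add_zero, delta_aR hvisit hij, genAR_eq hij, br_add_left hBr, br_mul_left hBr,
    hg0, zero_mul, zero_add, br_AR_BR hBr hij hb, br_sumR_bR hBr hij hb, hm]
  by_cases hx : Xor (i = k ∨ i = l) (j = k ∨ j = l)
  · rw [if_pos hx, genAR_eq hij, hDstr ⟨MGenRaw.aR i j, hij⟩, delta_aR hvisit hij,
      genAR_eq hij, if_pos hx]
  · rw [if_neg hx, if_neg hx, map_zero, mul_zero, add_zero]

include hsLne hsLinv hsRne hsRinv hDstr hBr in
lemma core_aL_bR {i j k l : Fin n} (hij : i < j) (hb : k < l ∧ sR k = l) :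
    CoreEq hvisit Dstr Br ⟨MGenRaw.aL i j, hij⟩ ⟨MGenRaw.bR k l, hb⟩ := by
  unfold CoreEq
  have h2 : Br (X (⟨MGenRaw.aL i j, hij⟩ : MGen n sL sR))
      (deltaStrVal sL sR hvisit ⟨MGenRaw.bR k l, hb⟩) = 0 := by
    rw [delta_bR hvisit, pow_two, br_sq hBr]
  have hg0 : Br (gammaEl sL sR hvisit i + gammaEl sL sR hvisit j)
      (X (⟨MGenRaw.bR k l, hb⟩ : MGen n sL sR)) = 0 := by
    rw [br_add_left hBr,
      br_gamma_b hsLne hsLinv hsRne hsRinv hvisit hBr i _ (Or.inr ⟨k, l, hb, rfl⟩),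
      br_gamma_b hsLne hsLinv hsRne hsRinv hvisit hBr j _ (Or.inr ⟨k, l, hb, rfl⟩), add_zero]
  have hm : mBrVal sL sR (⟨MGenRaw.aL i j, hij⟩ : MGen n sL sR) ⟨MGenRaw.bR k l, hb⟩
      = 0 := rfl
  rw [h2, add_zero, delta_aL hvisit hij, genAL_eq hij, br_add_left hBr, br_mul_left hBr,
    hg0, zero_mul, zero_add, br_AL_BR hBr hij hb, br_sumL_bR hBr hij hb, hm, map_zero,
    mul_zero, add_zero]

include hsLne hsLinv hsRne hsRinv hDstr hBr in
lemma core_aR_bL {i j k l : Fin n} (hij : i < j) (hb : k < l ∧ sL k = l) :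
    CoreEq hvisit Dstr Br ⟨MGenRaw.aR i j, hij⟩ ⟨MGenRaw.bL k l, hb⟩ := by
  unfold CoreEq
  have h2 : Br (X (⟨MGenRaw.aR i j, hij⟩ : MGen n sL sR))
      (deltaStrVal sL sR hvisit ⟨MGenRaw.bL k l, hb⟩) = 0 := by
    rw [delta_bL hvisit, pow_two, br_sq hBr]
  have hg0 : Br (gammaEl sL sR hvisit i + gammaEl sL sR hvisit j)
      (X (⟨MGenRaw.bL k l, hb⟩ : MGen n sL sR)) = 0 := by
    rw [br_add_left hBr,
      br_gamma_b hsLne hsLinv hsRne hsRinv hvisit hBr i _ (Or.inl ⟨k, l, hb, rfl⟩),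
      br_gamma_b hsLne hsLinv hsRne hsRinv hvisit hBr j _ (Or.inl ⟨k, l, hb, rfl⟩), add_zero]
  have hm : mBrVal sL sR (⟨MGenRaw.aR i j, hij⟩ : MGen n sL sR) ⟨MGenRaw.bL k l, hb⟩
      = 0 := rfl
  rw [h2, add_zero, delta_aR hvisit hij, genAR_eq hij, br_add_left hBr, br_mul_left hBr,
    hg0, zero_mul, zero_add, br_AR_BL hBr hij hb, br_sumR_bL hBr hij hb, hm, map_zero,
    mul_zero, add_zero]

end Core

end SFTProof
namespace SFTProof
set_option linter.unusedSectionVars false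

section Core2

variable {n : ℕ} [NeZero n] {sL sR : Equiv.Perm (Fin n)}
variable (hsLne : ∀ i, sL i ≠ i) (hsLinv : ∀ i, sL (sL i) = i)
variable (hsRne : ∀ i, sR i ≠ i) (hsRinv : ∀ i, sR (sR i) = i)
variable (hvisit : ∀ i : Fin n, ∃ m, pathSeq sL sR m = i)
variable (Dstr : Derivation (ZMod 2) (AM n sL sR) (AM n sL sR))
variable (hDstr : ∀ g : MGen n sL sR, Dstr (X g) = deltaStrVal sL sR hvisit g)
variable {Br : AM n sL sR → AM n sL sR → AM n sL sR} (hBr : IsSFTBracket sL sR Br)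

include hsLne hsLinv hsRne hsRinv hBr in
lemma core_aL_aR {i j k l : Fin n} (hij : i < j) (hkl : k < l) :
    CoreEq hvisit Dstr Br ⟨MGenRaw.aL i j, hij⟩ ⟨MGenRaw.aR k l, hkl⟩ := by
  unfold CoreEq
  have hTk : T hvisit k < n := T_lt hsLne hsLinv hsRne hsRinv hvisit k
  have hTl : T hvisit l < n := T_lt hsLne hsLinv hsRne hsRinv hvisit l
  have hm : mBrVal sL sR (⟨MGenRaw.aL i j, hij⟩ : MGen n sL sR) ⟨MGenRaw.aR k l, hkl⟩
      = 0 := rfl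
  rw [hm, map_zero, delta_aL hvisit hij, genAL_eq hij, delta_aR hvisit hkl, genAR_eq hkl,
    br_add_left hBr, br_mul_left hBr, br_sumL_aR hBr hij hkl,
    br_AL_AR hBr hij hkl, mul_zero, add_zero, add_zero,
    br_add_left hBr,
    br_gamma_aR hsLne hsLinv hsRne hsRinv hvisit hBr i hkl,
    br_gamma_aR hsLne hsLinv hsRne hsRinv hvisit hBr j hkl,
    br_add hBr, br_mul hBr, br_AL_AR hBr hij hkl, mul_zero, add_zero,
    br_symm hBr (X (⟨MGenRaw.aL i j, hij⟩ : MGen n sL sR))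
      (∑ m : Fin n, if k < m ∧ m < l then genAR sL sR k m * genAR sL sR m l else 0),
    br_sumR_aL hBr hkl hij, add_zero,
    br_symm hBr (X (⟨MGenRaw.aL i j, hij⟩ : MGen n sL sR))
      (gammaEl sL sR hvisit k + gammaEl sL sR hvisit l),
    br_add_left hBr,
    br_gamma_aL hsLne hsLinv hsRne hsRinv hvisit hBr k hij,
    br_gamma_aL hsLne hsLinv hsRne hsRinv hvisit hBr l hij,
    ← add_smul, ← add_smul, smul_mul_assoc, smul_mul_assoc,
    mul_comm (X (⟨MGenRaw.aR k l, hkl⟩ : MGen n sL sR))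
      (X (⟨MGenRaw.aL i j, hij⟩ : MGen n sL sR)),
    ← add_smul]
  have hsc : ((((if rE (T hvisit k) < T hvisit i then (1 : ZMod 2) else 0)
        + (if rE (T hvisit l) < T hvisit i then 1 else 0))
      + ((if rE (T hvisit k) < T hvisit j then 1 else 0)
        + (if rE (T hvisit l) < T hvisit j then 1 else 0)))
      + (((if lE n (T hvisit i) < T hvisit k then 1 else 0)
        + (if lE n (T hvisit j) < T hvisit k then 1 else 0))
      + ((if lE n (T hvisit i) < T hvisit l then 1 else 0)
        + (if lE n (T hvisit j) < T hvisit l then 1 else 0)))) = 0 := by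
    rw [char2_regroup4,
      qMix_parity n (T hvisit i) (T hvisit k) hTk,
      qMix_parity n (T hvisit i) (T hvisit l) hTl,
      qMix_parity n (T hvisit j) (T hvisit k) hTk,
      qMix_parity n (T hvisit j) (T hvisit l) hTl]
    split_ifs <;> decide
  rw [hsc, zero_smul]

end Core2

end SFTProof
namespace SFTProof
set_option linter.unusedSectionVars false

section Core3

variable {n : ℕ} [NeZero n] {sL sR : Equiv.Perm (Fin n)}
variable (hsLne : ∀ i, sL i ≠ i) (hsLinv : ∀ i, sL (sL i) = i)
variable (hsRne : ∀ i, sR i ≠ i) (hsRinv : ∀ i, sR (sR i) = i)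
variable (hvisit : ∀ i : Fin n, ∃ m, pathSeq sL sR m = i)

/-- scalar: L-edge of `b` lies on the path to `a`. -/
noncomputable def eL (hvisit : ∀ i : Fin n, ∃ m, pathSeq sL sR m = i) (a b : Fin n) : ZMod 2 :=
  if lE n (T hvisit b) < T hvisit a then 1 else 0

/-- scalar: R-edge of `b` lies on the path to `a`. -/
noncomputable def eR (hvisit : ∀ i : Fin n, ∃ m, pathSeq sL sR m = i) (a b : Fin n) : ZMod 2 :=
  if rE (T hvisit b) < T hvisit a then 1 else 0

include hsLne hsLinv hsRne hsRinv in
lemma qL_vertex (a b : Fin n) :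
    eL hvisit a b + eL hvisit b a = if a = b ∨ a = 0 ∨ b = 0 then 0 else 1 := by
  unfold eL
  rw [qL_parity n (T hvisit a) (T hvisit b)
    (T_lt hsLne hsLinv hsRne hsRinv hvisit a) (T_lt hsLne hsLinv hsRne hsRinv hvisit b)]
  refine if_congr ?_ rfl rfl
  constructor
  · rintro (h | h | h)
    · exact Or.inl (T_inj hsLne hsLinv hsRne hsRinv hvisit h)
    · exact Or.inr (Or.inl ((T_eq_zero_iff hvisit a).1 h))
    · exact Or.inr (Or.inr ((T_eq_zero_iff hvisit b).1 h))
  · rintro (rfl | rfl | rfl)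
    · exact Or.inl rfl
    · exact Or.inr (Or.inl (T_zero hvisit))
    · exact Or.inr (Or.inr (T_zero hvisit))

include hsLne hsLinv hsRne hsRinv in
lemma qR_vertex (a b : Fin n) :
    eR hvisit a b + eR hvisit b a = if a = b then 0 else 1 := by
  unfold eR
  rw [show (if rE (T hvisit b) < T hvisit a then (1 : ZMod 2) else 0)
        + (if rE (T hvisit a) < T hvisit b then 1 else 0)
      = if T hvisit a = T hvisit b then 0 else 1 from qR_parity _ _]
  refine if_congr ?_ rfl rfl
  exact ⟨fun h => T_inj hsLne hsLinv hsRne hsRinv hvisit h, fun h => by rw [h]⟩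

include hsLne hsLinv hsRne hsRinv in
lemma qMix_vertex (a b : Fin n) :
    eR hvisit a b + eL hvisit b a = if a = 0 then 0 else 1 := by
  unfold eR eL
  rw [qMix_parity n (T hvisit a) (T hvisit b) (T_lt hsLne hsLinv hsRne hsRinv hvisit b)]
  refine if_congr ?_ rfl rfl
  exact ⟨fun h => (T_eq_zero_iff hvisit a).1 h, fun h => by rw [h]; exact T_zero hvisit⟩

variable {Br : AM n sL sR → AM n sL sR → AM n sL sR} (hBr : IsSFTBracket sL sR Br)

include hsLne hsLinv hsRne hsRinv hBr in
lemma br_gamma_aL' (a : Fin n) {k l : Fin n} (hkl : k < l) :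
    Br (gammaEl sL sR hvisit a) (X (⟨MGenRaw.aL k l, hkl⟩ : MGen n sL sR))
      = (eL hvisit a k + eL hvisit a l) • X (⟨MGenRaw.aL k l, hkl⟩ : MGen n sL sR) :=
  br_gamma_aL hsLne hsLinv hsRne hsRinv hvisit hBr a hkl

include hsLne hsLinv hsRne hsRinv hBr in
lemma br_gamma_aR' (a : Fin n) {k l : Fin n} (hkl : k < l) :
    Br (gammaEl sL sR hvisit a) (X (⟨MGenRaw.aR k l, hkl⟩ : MGen n sL sR))
      = (eR hvisit a k + eR hvisit a l) • X (⟨MGenRaw.aR k l, hkl⟩ : MGen n sL sR) :=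
  br_gamma_aR hsLne hsLinv hsRne hsRinv hvisit hBr a hkl

variable (Dstr : Derivation (ZMod 2) (AM n sL sR) (AM n sL sR))
variable (hDstr : ∀ g : MGen n sL sR, Dstr (X g) = deltaStrVal sL sR hvisit g)

include hsLne hsLinv hsRne hsRinv hDstr hBr in
lemma core_aL_aL_adj {i j l : Fin n} (hij : i < j) (hjl : j < l) :
    CoreEq hvisit Dstr Br ⟨MGenRaw.aL i j, hij⟩ ⟨MGenRaw.aL j l, hjl⟩ := by
  unfold CoreEq
  have hil : i < l := hij.trans hjl
  have hj0 : j ≠ 0 := fun h => by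
    subst h
    simp only [Fin.lt_def, Fin.val_zero] at hij
    omega
  have hl0 : l ≠ 0 := fun h => by
    subst h
    simp only [Fin.lt_def, Fin.val_zero] at hjl
    omega
  have hsum : (∑ m : Fin n, if i < m ∧ m < l then genAL sL sR i m * genAL sL sR m l else 0)
      = ((∑ m : Fin n, if i < m ∧ m < j then genAL sL sR i m * genAL sL sR m l else 0)
          + genAL sL sR i j * genAL sL sR j l)
        + (∑ m : Fin n, if j < m ∧ m < l then genAL sL sR i m * genAL sL sR m l else 0) := by
    have hmid : genAL sL sR i j * genAL sL sR j l
        = ∑ m : Fin n, if m = j then genAL sL sR i m * genAL sL sR m l else 0 := by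
      rw [Finset.sum_ite_eq' Finset.univ j
        (fun m => genAL sL sR i m * genAL sL sR m l)]
      simp
    rw [hmid, ← Finset.sum_add_distrib, ← Finset.sum_add_distrib]
    refine Finset.sum_congr rfl fun m _ => ?_
    have h1 : (i : ℕ) < (j : ℕ) := hij
    have h2 : (j : ℕ) < (l : ℕ) := hjl
    simp only [Fin.lt_def, Fin.ext_iff]
    split_ifs <;> (first | ring1 | (exfalso; omega))
  have hscal : (((eL hvisit i j + eL hvisit i l) + (eL hvisit j j + eL hvisit j l))
      + ((eL hvisit j i + eL hvisit j j) + (eL hvisit l i + eL hvisit l j)))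
      = (1 : ZMod 2) := by
    rw [char2_regroup3, qL_vertex hsLne hsLinv hsRne hsRinv hvisit i j,
      qL_vertex hsLne hsLinv hsRne hsRinv hvisit i l,
      qL_vertex hsLne hsLinv hsRne hsRinv hvisit j l]
    have h1 : i ≠ j := hij.ne
    have h2 : i ≠ l := hil.ne
    have h3 : j ≠ l := hjl.ne
    split_ifs <;> first | decide | (exfalso; tauto)
  have hC : (C (((eL hvisit i j + eL hvisit i l) + (eL hvisit j j + eL hvisit j l)))
      + C (((eL hvisit j i + eL hvisit j j) + (eL hvisit l i + eL hvisit l j)))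
      : AM n sL sR) = 1 := by
    rw [← C_add, hscal, C_1]
  rw [mBr_aL_aL hij hjl, if_pos rfl, genAL_eq hil, hDstr ⟨MGenRaw.aL i l, hil⟩,
    delta_aL hvisit hil, hsum,
    delta_aL hvisit hij, delta_aL hvisit hjl, genAL_eq hij, genAL_eq hjl,
    br_add_left hBr, br_mul_left hBr, br_add_left hBr,
    br_gamma_aL' hsLne hsLinv hsRne hsRinv hvisit hBr i hjl,
    br_gamma_aL' hsLne hsLinv hsRne hsRinv hvisit hBr j hjl,
    br_AL_AL hBr hij hjl, if_pos rfl, br_sumL_adj hBr hij hjl,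
    br_add hBr, br_mul hBr,
    br_symm hBr (X (⟨MGenRaw.aL i j, hij⟩ : MGen n sL sR))
      (gammaEl sL sR hvisit j + gammaEl sL sR hvisit l),
    br_add_left hBr,
    br_gamma_aL' hsLne hsLinv hsRne hsRinv hvisit hBr j hij,
    br_gamma_aL' hsLne hsLinv hsRne hsRinv hvisit hBr l hij,
    br_adj_sumL hBr hij hjl, br_AL_AL hBr hij hjl, if_pos rfl,
    ← add_smul, ← add_smul, smul_mul_assoc, smul_mul_assoc, genAL_eq hil]
  simp only [smul_eq_C_mul]
  linear_combination (-(X (⟨MGenRaw.aL i j, hij⟩ : MGen n sL sR)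
      * X (⟨MGenRaw.aL j l, hjl⟩ : MGen n sL sR))) * hC
    - (gammaEl sL sR hvisit j * X (⟨MGenRaw.aL i l, hil⟩ : MGen n sL sR))
      * (one_add_one_eq_zero (n := n) (sL := sL) (sR := sR))

end Core3

end SFTProof
namespace SFTProof
set_option linter.unusedSectionVars false

section Quad

variable {n : ℕ} [NeZero n] {sL sR : Equiv.Perm (Fin n)}

lemma quad_identity_L {i j k l : Fin n} (hij : i < j) (hkl : k < l) (hjk : j ≠ k)
    (hil : i ≠ l) :
    ((if i < k ∧ k < j then genAL sL sR i l * genAL sL sR k j else 0)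
        + (if i < l ∧ l < j then genAL sL sR i l * genAL sL sR k j else 0))
      + ((if k < i ∧ i < l then genAL sL sR k j * genAL sL sR i l else 0)
        + (if k < j ∧ j < l then genAL sL sR k j * genAL sL sR i l else 0))
      = C ((if i = k then (1 : ZMod 2) else 0) + (if j = l then 1 else 0))
        * (X (⟨MGenRaw.aL k l, hkl⟩ : MGen n sL sR)
            * X (⟨MGenRaw.aL i j, hij⟩ : MGen n sL sR)) := by
  have hij' : (i : ℕ) < j := hij
  have hkl' : (k : ℕ) < l := hkl
  have hjk' : (j : ℕ) ≠ k := fun h => hjk (Fin.ext h)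
  have hil' : (i : ℕ) ≠ l := fun h => hil (Fin.ext h)
  by_cases hik : i = k
  · subst hik
    by_cases hjl2 : j = l
    · subst hjl2
      rw [if_neg (show ¬(i < i ∧ i < j) from by simp only [Fin.lt_def]; omega),
        if_neg (show ¬(i < j ∧ j < j) from by simp only [Fin.lt_def]; omega),
        if_pos rfl, if_pos rfl, show ((1 : ZMod 2) + 1) = 0 from by decide, C_0, zero_mul]
      simp
    · have hjl' : (j : ℕ) ≠ l := fun h => hjl2 (Fin.ext h)
      rw [if_pos rfl, if_neg hjl2,
        if_neg (show ¬(i < i ∧ i < j) from by simp only [Fin.lt_def]; omega),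
        if_neg (show ¬(i < i ∧ i < l) from by simp only [Fin.lt_def]; omega),
        show ((1 : ZMod 2) + 0) = 1 from by decide, C_1, one_mul]
      rcases Nat.lt_or_ge (j : ℕ) (l : ℕ) with h | h
      · rw [if_neg (show ¬(i < l ∧ l < j) from by simp only [Fin.lt_def]; omega),
          if_pos (show i < j ∧ j < l from by simp only [Fin.lt_def]; omega),
          genAL_eq hij, genAL_eq hkl]
        try ring1
      · rw [if_pos (show i < l ∧ l < j from by simp only [Fin.lt_def]; omega),
          if_neg (show ¬(i < j ∧ j < l) from by simp only [Fin.lt_def]; omega),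
          genAL_eq hij, genAL_eq hkl]
        try ring1
  · have hik' : (i : ℕ) ≠ k := fun h => hik (Fin.ext h)
    by_cases hjl2 : j = l
    · subst hjl2
      rw [if_neg hik, if_pos rfl,
        if_neg (show ¬(i < j ∧ j < j) from by simp only [Fin.lt_def]; omega),
        if_neg (show ¬(k < j ∧ j < j) from by simp only [Fin.lt_def]; omega),
        show ((0 : ZMod 2) + 1) = 1 from by decide, C_1, one_mul]
      rcases Nat.lt_or_ge (i : ℕ) (k : ℕ) with h | h
      · rw [if_pos (show i < k ∧ k < j from by simp only [Fin.lt_def]; omega),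
          if_neg (show ¬(k < i ∧ i < j) from by simp only [Fin.lt_def]; omega),
          genAL_eq hij, genAL_eq hkl]
        try ring1
      · rw [if_neg (show ¬(i < k ∧ k < j) from by simp only [Fin.lt_def]; omega),
          if_pos (show k < i ∧ i < j from by simp only [Fin.lt_def]; omega),
          genAL_eq hij, genAL_eq hkl]
        try ring1
    · have hjl' : (j : ℕ) ≠ l := fun h => hjl2 (Fin.ext h)
      rw [if_neg hik, if_neg hjl2, show ((0 : ZMod 2) + 0) = 0 from by decide, C_0, zero_mul]
      simp only [Fin.lt_def]
      split_ifs <;>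
        (first
          | (exfalso; omega)
          | ((simp only [add_zero, zero_add]) <;>
              (first
                | with_reducible exact add_self_zero _
                | (rw [mul_comm (genAL sL sR i l) (genAL sL sR k j)]
                   exact add_self_zero _))))

lemma quad_identity_R {i j k l : Fin n} (hij : i < j) (hkl : k < l) (hjk : j ≠ k)
    (hil : i ≠ l) :
    ((if i < k ∧ k < j then genAR sL sR i l * genAR sL sR k j else 0)
        + (if i < l ∧ l < j then genAR sL sR i l * genAR sL sR k j else 0))
      + ((if k < i ∧ i < l then genAR sL sR k j * genAR sL sR i l else 0)
        + (if k < j ∧ j < l then genAR sL sR k j * genAR sL sR i l else 0))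
      = C ((if i = k then (1 : ZMod 2) else 0) + (if j = l then 1 else 0))
        * (X (⟨MGenRaw.aR k l, hkl⟩ : MGen n sL sR)
            * X (⟨MGenRaw.aR i j, hij⟩ : MGen n sL sR)) := by
  have hij' : (i : ℕ) < j := hij
  have hkl' : (k : ℕ) < l := hkl
  have hjk' : (j : ℕ) ≠ k := fun h => hjk (Fin.ext h)
  have hil' : (i : ℕ) ≠ l := fun h => hil (Fin.ext h)
  by_cases hik : i = k
  · subst hik
    by_cases hjl2 : j = l
    · subst hjl2
      rw [if_neg (show ¬(i < i ∧ i < j) from by simp only [Fin.lt_def]; omega),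
        if_neg (show ¬(i < j ∧ j < j) from by simp only [Fin.lt_def]; omega),
        if_pos rfl, if_pos rfl, show ((1 : ZMod 2) + 1) = 0 from by decide, C_0, zero_mul]
      simp
    · have hjl' : (j : ℕ) ≠ l := fun h => hjl2 (Fin.ext h)
      rw [if_pos rfl, if_neg hjl2,
        if_neg (show ¬(i < i ∧ i < j) from by simp only [Fin.lt_def]; omega),
        if_neg (show ¬(i < i ∧ i < l) from by simp only [Fin.lt_def]; omega),
        show ((1 : ZMod 2) + 0) = 1 from by decide, C_1, one_mul]
      rcases Nat.lt_or_ge (j : ℕ) (l : ℕ) with h | h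
      · rw [if_neg (show ¬(i < l ∧ l < j) from by simp only [Fin.lt_def]; omega),
          if_pos (show i < j ∧ j < l from by simp only [Fin.lt_def]; omega),
          genAR_eq hij, genAR_eq hkl]
        try ring1
      · rw [if_pos (show i < l ∧ l < j from by simp only [Fin.lt_def]; omega),
          if_neg (show ¬(i < j ∧ j < l) from by simp only [Fin.lt_def]; omega),
          genAR_eq hij, genAR_eq hkl]
        try ring1
  · have hik' : (i : ℕ) ≠ k := fun h => hik (Fin.ext h)
    by_cases hjl2 : j = l
    · subst hjl2
      rw [if_neg hik, if_pos rfl,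
        if_neg (show ¬(i < j ∧ j < j) from by simp only [Fin.lt_def]; omega),
        if_neg (show ¬(k < j ∧ j < j) from by simp only [Fin.lt_def]; omega),
        show ((0 : ZMod 2) + 1) = 1 from by decide, C_1, one_mul]
      rcases Nat.lt_or_ge (i : ℕ) (k : ℕ) with h | h
      · rw [if_pos (show i < k ∧ k < j from by simp only [Fin.lt_def]; omega),
          if_neg (show ¬(k < i ∧ i < j) from by simp only [Fin.lt_def]; omega),
          genAR_eq hij, genAR_eq hkl]
        try ring1
      · rw [if_neg (show ¬(i < k ∧ k < j) from by simp only [Fin.lt_def]; omega),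
          if_pos (show k < i ∧ i < j from by simp only [Fin.lt_def]; omega),
          genAR_eq hij, genAR_eq hkl]
        try ring1
    · have hjl' : (j : ℕ) ≠ l := fun h => hjl2 (Fin.ext h)
      rw [if_neg hik, if_neg hjl2, show ((0 : ZMod 2) + 0) = 0 from by decide, C_0, zero_mul]
      simp only [Fin.lt_def]
      split_ifs <;>
        (first
          | (exfalso; omega)
          | ((simp only [add_zero, zero_add]) <;>
              (first
                | with_reducible exact add_self_zero _
                | (rw [mul_comm (genAR sL sR i l) (genAR sL sR k j)]
                   exact add_self_zero _))))

end Quad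

end SFTProof
namespace SFTProof
set_option linter.unusedSectionVars false

section Core4

variable {n : ℕ} [NeZero n] {sL sR : Equiv.Perm (Fin n)}
variable (hsLne : ∀ i, sL i ≠ i) (hsLinv : ∀ i, sL (sL i) = i)
variable (hsRne : ∀ i, sR i ≠ i) (hsRinv : ∀ i, sR (sR i) = i)
variable (hvisit : ∀ i : Fin n, ∃ m, pathSeq sL sR m = i)
variable (Dstr : Derivation (ZMod 2) (AM n sL sR) (AM n sL sR))
variable (hDstr : ∀ g : MGen n sL sR, Dstr (X g) = deltaStrVal sL sR hvisit g)
variable {Br : AM n sL sR → AM n sL sR → AM n sL sR} (hBr : IsSFTBracket sL sR Br)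

include hsLne hsLinv hsRne hsRinv hDstr hBr in
lemma core_aR_aR_adj {i j l : Fin n} (hij : i < j) (hjl : j < l) :
    CoreEq hvisit Dstr Br ⟨MGenRaw.aR i j, hij⟩ ⟨MGenRaw.aR j l, hjl⟩ := by
  unfold CoreEq
  have hil : i < l := hij.trans hjl
  have hsum : (∑ m : Fin n, if i < m ∧ m < l then genAR sL sR i m * genAR sL sR m l else 0)
      = ((∑ m : Fin n, if i < m ∧ m < j then genAR sL sR i m * genAR sL sR m l else 0)
          + genAR sL sR i j * genAR sL sR j l)
        + (∑ m : Fin n, if j < m ∧ m < l then genAR sL sR i m * genAR sL sR m l else 0) := by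
    have hmid : genAR sL sR i j * genAR sL sR j l
        = ∑ m : Fin n, if m = j then genAR sL sR i m * genAR sL sR m l else 0 := by
      rw [Finset.sum_ite_eq' Finset.univ j
        (fun m => genAR sL sR i m * genAR sL sR m l)]
      simp
    rw [hmid, ← Finset.sum_add_distrib, ← Finset.sum_add_distrib]
    refine Finset.sum_congr rfl fun m _ => ?_
    have h1 : (i : ℕ) < (j : ℕ) := hij
    have h2 : (j : ℕ) < (l : ℕ) := hjl
    simp only [Fin.lt_def, Fin.ext_iff]
    split_ifs <;> (first | ring1 | (exfalso; omega))
  have hscal : (((eR hvisit i j + eR hvisit i l) + (eR hvisit j j + eR hvisit j l))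
      + ((eR hvisit j i + eR hvisit j j) + (eR hvisit l i + eR hvisit l j)))
      = (1 : ZMod 2) := by
    rw [char2_regroup3, qR_vertex hsLne hsLinv hsRne hsRinv hvisit i j,
      qR_vertex hsLne hsLinv hsRne hsRinv hvisit i l,
      qR_vertex hsLne hsLinv hsRne hsRinv hvisit j l]
    have h1 : i ≠ j := hij.ne
    have h2 : i ≠ l := hil.ne
    have h3 : j ≠ l := hjl.ne
    split_ifs <;> (first | decide | (exfalso; tauto))
  have hC : (C (((eR hvisit i j + eR hvisit i l) + (eR hvisit j j + eR hvisit j l)))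
      + C (((eR hvisit j i + eR hvisit j j) + (eR hvisit l i + eR hvisit l j)))
      : AM n sL sR) = 1 := by
    rw [← C_add, hscal, C_1]
  rw [mBr_aR_aR hij hjl, if_pos rfl, genAR_eq hil, hDstr ⟨MGenRaw.aR i l, hil⟩,
    delta_aR hvisit hil, hsum,
    delta_aR hvisit hij, delta_aR hvisit hjl, genAR_eq hij, genAR_eq hjl,
    br_add_left hBr, br_mul_left hBr, br_add_left hBr,
    br_gamma_aR' hsLne hsLinv hsRne hsRinv hvisit hBr i hjl,
    br_gamma_aR' hsLne hsLinv hsRne hsRinv hvisit hBr j hjl,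
    br_AR_AR hBr hij hjl, if_pos rfl, br_sumR_adj hBr hij hjl,
    br_add hBr, br_mul hBr,
    br_symm hBr (X (⟨MGenRaw.aR i j, hij⟩ : MGen n sL sR))
      (gammaEl sL sR hvisit j + gammaEl sL sR hvisit l),
    br_add_left hBr,
    br_gamma_aR' hsLne hsLinv hsRne hsRinv hvisit hBr j hij,
    br_gamma_aR' hsLne hsLinv hsRne hsRinv hvisit hBr l hij,
    br_adj_sumR hBr hij hjl, br_AR_AR hBr hij hjl, if_pos rfl,
    ← add_smul, ← add_smul, smul_mul_assoc, smul_mul_assoc, genAR_eq hil]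
  simp only [smul_eq_C_mul]
  linear_combination (-(X (⟨MGenRaw.aR i j, hij⟩ : MGen n sL sR)
      * X (⟨MGenRaw.aR j l, hjl⟩ : MGen n sL sR))) * hC
    - (gammaEl sL sR hvisit j * X (⟨MGenRaw.aR i l, hil⟩ : MGen n sL sR))
      * (one_add_one_eq_zero (n := n) (sL := sL) (sR := sR))

include hsLne hsLinv hsRne hsRinv hBr in
lemma core_aL_aL_gen {i j k l : Fin n} (hij : i < j) (hkl : k < l) (hjk : j ≠ k)
    (hil : i ≠ l) :
    CoreEq hvisit Dstr Br ⟨MGenRaw.aL i j, hij⟩ ⟨MGenRaw.aL k l, hkl⟩ := by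
  unfold CoreEq
  have hij' : (i : ℕ) < j := hij
  have hkl' : (k : ℕ) < l := hkl
  have hjk' : (j : ℕ) ≠ k := fun h => hjk (Fin.ext h)
  have hil' : (i : ℕ) ≠ l := fun h => hil (Fin.ext h)
  have hVal : (((eL hvisit i k + eL hvisit i l) + (eL hvisit j k + eL hvisit j l))
      + ((eL hvisit k i + eL hvisit k j) + (eL hvisit l i + eL hvisit l j)))
      = ((if i = k then (1 : ZMod 2) else 0) + (if j = l then 1 else 0)) := by
    rw [char2_regroup4, qL_vertex hsLne hsLinv hsRne hsRinv hvisit i k,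
      qL_vertex hsLne hsLinv hsRne hsRinv hvisit i l,
      qL_vertex hsLne hsLinv hsRne hsRinv hvisit j k,
      qL_vertex hsLne hsLinv hsRne hsRinv hvisit j l]
    simp only [Fin.ext_iff, Fin.val_zero]
    split_ifs <;> (first | decide | (exfalso; omega))
  have hC : (C (((eL hvisit i k + eL hvisit i l) + (eL hvisit j k + eL hvisit j l)))
      + C (((eL hvisit k i + eL hvisit k j) + (eL hvisit l i + eL hvisit l j)))
      : AM n sL sR)
      = C ((if i = k then (1 : ZMod 2) else 0) + (if j = l then 1 else 0)) := by
    rw [← C_add, hVal]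
  have hquad := quad_identity_L (sL := sL) (sR := sR) hij hkl hjk hil
  rw [mBr_aL_aL hij hkl, if_neg hjk, if_neg hil, map_zero,
    delta_aL hvisit hij, delta_aL hvisit hkl, genAL_eq hij, genAL_eq hkl,
    br_add_left hBr, br_mul_left hBr, br_add_left hBr,
    br_gamma_aL' hsLne hsLinv hsRne hsRinv hvisit hBr i hkl,
    br_gamma_aL' hsLne hsLinv hsRne hsRinv hvisit hBr j hkl,
    br_AL_AL hBr hij hkl, if_neg hjk, if_neg hil,
    br_sumL_gen hBr hij hkl hjk hil,
    br_add hBr, br_mul hBr,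
    br_symm hBr (X (⟨MGenRaw.aL i j, hij⟩ : MGen n sL sR))
      (gammaEl sL sR hvisit k + gammaEl sL sR hvisit l),
    br_add_left hBr,
    br_gamma_aL' hsLne hsLinv hsRne hsRinv hvisit hBr k hij,
    br_gamma_aL' hsLne hsLinv hsRne hsRinv hvisit hBr l hij,
    br_AL_AL hBr hij hkl, if_neg hjk, if_neg hil,
    br_gen_sumL hBr hij hkl hjk hil,
    ← add_smul, ← add_smul, smul_mul_assoc, smul_mul_assoc]
  simp only [smul_eq_C_mul]
  linear_combination -hquad
    - (X (⟨MGenRaw.aL k l, hkl⟩ : MGen n sL sR)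
        * X (⟨MGenRaw.aL i j, hij⟩ : MGen n sL sR)) * hC
    - (C ((if i = k then (1 : ZMod 2) else 0) + (if j = l then 1 else 0))
        * (X (⟨MGenRaw.aL k l, hkl⟩ : MGen n sL sR)
            * X (⟨MGenRaw.aL i j, hij⟩ : MGen n sL sR)))
      * (one_add_one_eq_zero (n := n) (sL := sL) (sR := sR))

include hsLne hsLinv hsRne hsRinv hBr in
lemma core_aR_aR_gen {i j k l : Fin n} (hij : i < j) (hkl : k < l) (hjk : j ≠ k)
    (hil : i ≠ l) :
    CoreEq hvisit Dstr Br ⟨MGenRaw.aR i j, hij⟩ ⟨MGenRaw.aR k l, hkl⟩ := by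
  unfold CoreEq
  have hij' : (i : ℕ) < j := hij
  have hkl' : (k : ℕ) < l := hkl
  have hjk' : (j : ℕ) ≠ k := fun h => hjk (Fin.ext h)
  have hil' : (i : ℕ) ≠ l := fun h => hil (Fin.ext h)
  have hVal : (((eR hvisit i k + eR hvisit i l) + (eR hvisit j k + eR hvisit j l))
      + ((eR hvisit k i + eR hvisit k j) + (eR hvisit l i + eR hvisit l j)))
      = ((if i = k then (1 : ZMod 2) else 0) + (if j = l then 1 else 0)) := by
    rw [char2_regroup4, qR_vertex hsLne hsLinv hsRne hsRinv hvisit i k,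
      qR_vertex hsLne hsLinv hsRne hsRinv hvisit i l,
      qR_vertex hsLne hsLinv hsRne hsRinv hvisit j k,
      qR_vertex hsLne hsLinv hsRne hsRinv hvisit j l]
    simp only [Fin.ext_iff]
    split_ifs <;> (first | decide | (exfalso; omega))
  have hC : (C (((eR hvisit i k + eR hvisit i l) + (eR hvisit j k + eR hvisit j l)))
      + C (((eR hvisit k i + eR hvisit k j) + (eR hvisit l i + eR hvisit l j)))
      : AM n sL sR)
      = C ((if i = k then (1 : ZMod 2) else 0) + (if j = l then 1 else 0)) := by
    rw [← C_add, hVal]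
  have hquad := quad_identity_R (sL := sL) (sR := sR) hij hkl hjk hil
  rw [mBr_aR_aR hij hkl, if_neg hjk, if_neg hil, map_zero,
    delta_aR hvisit hij, delta_aR hvisit hkl, genAR_eq hij, genAR_eq hkl,
    br_add_left hBr, br_mul_left hBr, br_add_left hBr,
    br_gamma_aR' hsLne hsLinv hsRne hsRinv hvisit hBr i hkl,
    br_gamma_aR' hsLne hsLinv hsRne hsRinv hvisit hBr j hkl,
    br_AR_AR hBr hij hkl, if_neg hjk, if_neg hil,
    br_sumR_gen hBr hij hkl hjk hil,
    br_add hBr, br_mul hBr,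
    br_symm hBr (X (⟨MGenRaw.aR i j, hij⟩ : MGen n sL sR))
      (gammaEl sL sR hvisit k + gammaEl sL sR hvisit l),
    br_add_left hBr,
    br_gamma_aR' hsLne hsLinv hsRne hsRinv hvisit hBr k hij,
    br_gamma_aR' hsLne hsLinv hsRne hsRinv hvisit hBr l hij,
    br_AR_AR hBr hij hkl, if_neg hjk, if_neg hil,
    br_gen_sumR hBr hij hkl hjk hil,
    ← add_smul, ← add_smul, smul_mul_assoc, smul_mul_assoc]
  simp only [smul_eq_C_mul]
  linear_combination -hquad
    - (X (⟨MGenRaw.aR k l, hkl⟩ : MGen n sL sR)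
        * X (⟨MGenRaw.aR i j, hij⟩ : MGen n sL sR)) * hC
    - (C ((if i = k then (1 : ZMod 2) else 0) + (if j = l then 1 else 0))
        * (X (⟨MGenRaw.aR k l, hkl⟩ : MGen n sL sR)
            * X (⟨MGenRaw.aR i j, hij⟩ : MGen n sL sR)))
      * (one_add_one_eq_zero (n := n) (sL := sL) (sR := sR))

include hsLne hsLinv hsRne hsRinv hDstr hBr in
lemma core_aL_aL {i j k l : Fin n} (hij : i < j) (hkl : k < l) :
    CoreEq hvisit Dstr Br ⟨MGenRaw.aL i j, hij⟩ ⟨MGenRaw.aL k l, hkl⟩ := by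
  by_cases hjk : j = k
  · subst hjk
    exact core_aL_aL_adj hsLne hsLinv hsRne hsRinv hvisit hBr Dstr hDstr hij hkl
  · by_cases hil : i = l
    · subst hil
      exact core_swap hvisit Dstr hBr
        (core_aL_aL_adj hsLne hsLinv hsRne hsRinv hvisit hBr Dstr hDstr hkl hij)
    · exact core_aL_aL_gen hsLne hsLinv hsRne hsRinv hvisit Dstr hBr hij hkl hjk hil

include hsLne hsLinv hsRne hsRinv hDstr hBr in
lemma core_aR_aR {i j k l : Fin n} (hij : i < j) (hkl : k < l) :
    CoreEq hvisit Dstr Br ⟨MGenRaw.aR i j, hij⟩ ⟨MGenRaw.aR k l, hkl⟩ := by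
  by_cases hjk : j = k
  · subst hjk
    exact core_aR_aR_adj hsLne hsLinv hsRne hsRinv hvisit Dstr hDstr hBr hij hkl
  · by_cases hil : i = l
    · subst hil
      exact core_swap hvisit Dstr hBr
        (core_aR_aR_adj hsLne hsLinv hsRne hsRinv hvisit Dstr hDstr hBr hkl hij)
    · exact core_aR_aR_gen hsLne hsLinv hsRne hsRinv hvisit Dstr hBr hij hkl hjk hil

end Core4

end SFTProof
namespace SFTProof
set_option linter.unusedSectionVars false

section CoreAll

variable {n : ℕ} [NeZero n] {sL sR : Equiv.Perm (Fin n)}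
variable (hsLne : ∀ i, sL i ≠ i) (hsLinv : ∀ i, sL (sL i) = i)
variable (hsRne : ∀ i, sR i ≠ i) (hsRinv : ∀ i, sR (sR i) = i)
variable (hvisit : ∀ i : Fin n, ∃ m, pathSeq sL sR m = i)
variable (Dstr : Derivation (ZMod 2) (AM n sL sR) (AM n sL sR))
variable (hDstr : ∀ g : MGen n sL sR, Dstr (X g) = deltaStrVal sL sR hvisit g)
variable {Br : AM n sL sR → AM n sL sR → AM n sL sR} (hBr : IsSFTBracket sL sR Br)

include hsLne hsLinv hsRne hsRinv hDstr hBr in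
lemma core_all (g g' : MGen n sL sR) : CoreEq hvisit Dstr Br g g' := by
  obtain ⟨gr, hg⟩ := g
  obtain ⟨g'r, hg'⟩ := g'
  cases gr with
  | aL i j =>
    cases g'r with
    | aL k l => exact core_aL_aL hsLne hsLinv hsRne hsRinv hvisit Dstr hDstr hBr hg hg'
    | aR k l => exact core_aL_aR hsLne hsLinv hsRne hsRinv hvisit Dstr hBr hg hg'
    | bL k l => exact core_aL_bL hsLne hsLinv hsRne hsRinv hvisit Dstr hDstr hBr hg hg'
    | bR k l => exact core_aL_bR hsLne hsLinv hsRne hsRinv hvisit Dstr hDstr hBr hg hg'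
  | aR i j =>
    cases g'r with
    | aL k l =>
      exact core_swap hvisit Dstr hBr
        (core_aL_aR hsLne hsLinv hsRne hsRinv hvisit Dstr hBr hg' hg)
    | aR k l => exact core_aR_aR hsLne hsLinv hsRne hsRinv hvisit Dstr hDstr hBr hg hg'
    | bL k l => exact core_aR_bL hsLne hsLinv hsRne hsRinv hvisit Dstr hDstr hBr hg hg'
    | bR k l => exact core_aR_bR hsLne hsLinv hsRne hsRinv hvisit Dstr hDstr hBr hg hg'
  | bL i j =>
    cases g'r with
    | aL k l =>
      exact core_swap hvisit Dstr hBr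
        (core_aL_bL hsLne hsLinv hsRne hsRinv hvisit Dstr hDstr hBr hg' hg)
    | aR k l =>
      exact core_swap hvisit Dstr hBr
        (core_aR_bL hsLne hsLinv hsRne hsRinv hvisit Dstr hDstr hBr hg' hg)
    | bL k l =>
      exact core_b_b hvisit Dstr hBr _ _ (Or.inl ⟨i, j, hg, rfl⟩)
        (Or.inl ⟨k, l, hg', rfl⟩)
    | bR k l =>
      exact core_b_b hvisit Dstr hBr _ _ (Or.inl ⟨i, j, hg, rfl⟩)
        (Or.inr ⟨k, l, hg', rfl⟩)
  | bR i j =>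
    cases g'r with
    | aL k l =>
      exact core_swap hvisit Dstr hBr
        (core_aL_bR hsLne hsLinv hsRne hsRinv hvisit Dstr hDstr hBr hg' hg)
    | aR k l =>
      exact core_swap hvisit Dstr hBr
        (core_aR_bR hsLne hsLinv hsRne hsRinv hvisit Dstr hDstr hBr hg' hg)
    | bL k l =>
      exact core_b_b hvisit Dstr hBr _ _ (Or.inr ⟨i, j, hg, rfl⟩)
        (Or.inl ⟨k, l, hg', rfl⟩)
    | bR k l =>
      exact core_b_b hvisit Dstr hBr _ _ (Or.inr ⟨i, j, hg, rfl⟩)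
        (Or.inr ⟨k, l, hg', rfl⟩)

include hBr in
lemma Dstr_C (a : ZMod 2) : Dstr (C a : AM n sL sR) = 0 := by
  rw [show (C a : AM n sL sR) = algebraMap (ZMod 2) (AM n sL sR) a from rfl]
  exact Derivation.map_algebraMap Dstr a

end CoreAll

end SFTProof
/-- The string differential is a derivation of the SFT bracket. -/
theorem middle_deltaStr_derivation_of_bracket {n : ℕ} [NeZero n] (hn2 : 2 ≤ n) (hnEven : Even n)
    (sL sR : Equiv.Perm (Fin n))
    (hsLne : ∀ i, sL i ≠ i) (hsLinv : ∀ i, sL (sL i) = i)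
    (hsRne : ∀ i, sR i ≠ i) (hsRinv : ∀ i, sR (sR i) = i)
    (hvisit : ∀ i : Fin n, ∃ m, pathSeq sL sR m = i)
    (Dstr : Derivation (ZMod 2) (AM n sL sR) (AM n sL sR))
    (hDstr : ∀ g : MGen n sL sR, Dstr (X g) = deltaStrVal sL sR hvisit g)
    (Br : AM n sL sR → AM n sL sR → AM n sL sR)
    (hBr : IsSFTBracket sL sR Br) :
    ∀ x y : AM n sL sR, Dstr (Br x y) = Br (Dstr x) y + Br x (Dstr y) := by
  have hXX : ∀ g g' : MGen n sL sR,
      Dstr (Br (X g) (X g')) = Br (Dstr (X g)) (X g') + Br (X g) (Dstr (X g')) := by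
    intro g g'
    rw [SFTProof.br_gen hBr g g', hDstr g, hDstr g']
    exact SFTProof.core_all hsLne hsLinv hsRne hsRinv hvisit Dstr hDstr hBr g g'
  have hXp : ∀ (g : MGen n sL sR) (p : AM n sL sR),
      Dstr (Br (X g) p) = Br (Dstr (X g)) p + Br (X g) (Dstr p) := by
    intro g p
    induction p using MvPolynomial.induction_on with
    | C a =>
        rw [SFTProof.br_C hBr, map_zero, SFTProof.Dstr_C Dstr hBr a,
          SFTProof.br_zero hBr, SFTProof.br_C hBr, add_zero]
    | add p q hp hq =>
        rw [SFTProof.br_add hBr, map_add, hp, hq, map_add, SFTProof.br_add hBr,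
          SFTProof.br_add hBr]
        ring
    | mul_X p g' hp =>
        rw [SFTProof.br_mul hBr, map_add,
          Derivation.leibniz Dstr (Br (X g) p) (X g'),
          Derivation.leibniz Dstr p (Br (X g) (X g')),
          Derivation.leibniz Dstr p (X g')]
        simp only [smul_eq_mul]
        rw [hp, hXX g g', SFTProof.br_mul hBr, SFTProof.br_add hBr, SFTProof.br_mul hBr,
          SFTProof.br_mul hBr]
        ring
  intro x y
  induction x using MvPolynomial.induction_on with
  | C a =>
      rw [SFTProof.br_C_left hBr, map_zero, SFTProof.Dstr_C Dstr hBr a,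
        SFTProof.br_zero_left hBr, SFTProof.br_C_left hBr, add_zero]
  | add p q hp hq =>
      rw [SFTProof.br_add_left hBr, map_add, hp, hq, map_add, SFTProof.br_add_left hBr,
        SFTProof.br_add_left hBr]
      ring
  | mul_X p g hp =>
      rw [SFTProof.br_mul_left hBr, map_add,
        Derivation.leibniz Dstr (Br p y) (X g),
        Derivation.leibniz Dstr p (Br (X g) y),
        Derivation.leibniz Dstr p (X g)]
      simp only [smul_eq_mul]
      rw [hp, hXp g y, SFTProof.br_add_left hBr, SFTProof.br_mul_left hBr,
        SFTProof.br_mul_left hBr, SFTProof.br_mul_left hBr]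
      ring
end
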